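/- arXiv:1710.07069 — 5 statements merged into one kernel-verified Lean document; each statement's English description precedes it below -/
import Mathlib

section
/- Let a, β : [0,∞) → ℝ be continuous with β continuously differentiable, let λ > 0, and let f : [0,∞) → ℝ be continuously differentiable. Suppose z : [0,∞) → ℝ is the mode resolvent, i.e. z is continuously differentiable, z(0) = 1, and for all t ≥ 0: z'(t) + β(0)z(t) + ∫₀ᵗ β'(t−s)z(s) ds = −λ² ∫₀ᵗ a(t−s)z(s) ds. Then for all t ≥ 0: λ² ∫₀ᵗ z(t−s) (∫₀ˢ a(s−r)f(r) dr) ds = f(t) − f(0)·(z(t) + ∫₀ᵗ β(t−r)z(r) dr) − ∫₀ᵗ f'(t−s)·(z(s) + ∫₀ˢ β(s−r)z(r) dr) ds. -/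
open MeasureTheory Set intervalIntegral

noncomputable def gpExtend (g : ℝ → ℝ) : ℝ → ℝ := fun x => g (max x 0)

lemma gpExtend_continuous {g : ℝ → ℝ} (hg : ContinuousOn g (Set.Ici 0)) :
    Continuous (gpExtend g) := by
  exact hg.comp_continuous (continuous_id.max continuous_const) (fun x => mem_Ici.2 (le_max_right _ _))

lemma gpExtend_eq {g : ℝ → ℝ} {x : ℝ} (hx : 0 ≤ x) : gpExtend g x = g x := by
  simp [gpExtend, max_eq_left hx]


lemma triangle_swap (G : ℝ → ℝ → ℝ) (hG : Continuous (Function.uncurry G)) {t : ℝ} (ht : 0 ≤ t) :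
    ∫ σ in (0:ℝ)..t, ∫ s in (0:ℝ)..σ, G σ s = ∫ s in (0:ℝ)..t, ∫ σ in s..t, G σ s := by
  set μ := volume.restrict (Ioc (0:ℝ) t) with hμ
  set H : ℝ → ℝ → ℝ := fun σ s => if s ≤ σ then G σ s else 0 with hH
  have hHmeas : Measurable (Function.uncurry H) := by
    apply Measurable.ite (measurableSet_le measurable_snd measurable_fst)
    · exact hG.measurable
    · exact measurable_const
  obtain ⟨C, hC⟩ : ∃ C, ∀ p ∈ Icc (0:ℝ) t ×ˢ Icc (0:ℝ) t, ‖Function.uncurry G p‖ ≤ C := by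
    exact (isCompact_Icc.prod isCompact_Icc).exists_bound_of_continuousOn
      (hG.continuousOn (s := Icc (0:ℝ) t ×ˢ Icc (0:ℝ) t))
  have hint : Integrable (Function.uncurry H) (μ.prod μ) := by
    rw [hμ, Measure.prod_restrict]
    haveI : IsFiniteMeasure ((volume.prod volume).restrict (Ioc (0:ℝ) t ×ˢ Ioc (0:ℝ) t)) := by
      constructor
      rw [Measure.restrict_apply_univ, Measure.prod_prod]
      exact ENNReal.mul_lt_top measure_Ioc_lt_top measure_Ioc_lt_top
    apply Integrable.mono' (integrable_const C) (hHmeas.aestronglyMeasurable.restrict)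
    refine (ae_restrict_iff' ((measurableSet_Ioc).prod measurableSet_Ioc)).2
      (Filter.Eventually.of_forall fun p hp => ?_)
    have hp' : p ∈ Icc (0:ℝ) t ×ˢ Icc (0:ℝ) t :=
      ⟨Ioc_subset_Icc_self hp.1, Ioc_subset_Icc_self hp.2⟩
    by_cases h : p.2 ≤ p.1
    · simpa [Function.uncurry, hH, h] using hC p hp'
    · simp only [Function.uncurry, hH, h, if_false, norm_zero]
      exact le_trans (norm_nonneg _) (hC p hp')
  calc ∫ σ in (0:ℝ)..t, ∫ s in (0:ℝ)..σ, G σ s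
      = ∫ σ in Ioc (0:ℝ) t, ∫ s, H σ s ∂μ := by
        rw [integral_of_le ht]
        apply setIntegral_congr_fun measurableSet_Ioc
        intro σ hσ
        dsimp only
        rw [integral_of_le hσ.1.le, hμ]
        have hind : (fun s => H σ s) = (Iic σ).indicator (G σ) := by
          funext s; by_cases h : s ≤ σ <;> simp [hH, indicator, mem_Iic, h]
        rw [hind, setIntegral_indicator measurableSet_Iic, Ioc_inter_Iic,
          min_eq_right hσ.2]
    _ = ∫ s, ∫ σ, H σ s ∂μ ∂μ := by
        rw [hμ]
        exact MeasureTheory.integral_integral_swap hint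
    _ = ∫ s in (0:ℝ)..t, ∫ σ in s..t, G σ s := by
        rw [integral_of_le ht, hμ]
        apply setIntegral_congr_fun measurableSet_Ioc
        intro s hs
        dsimp only
        have hind : (fun σ => H σ s) = (Ici s).indicator (fun σ => G σ s) := by
          funext σ; by_cases h : s ≤ σ <;> simp [hH, indicator, mem_Ici, h]
        rw [hind, setIntegral_indicator measurableSet_Ici]
        have h2 : Ioc (0:ℝ) t ∩ Ici s = Icc s t := by
          ext x
          simp only [mem_inter_iff, mem_Ioc, mem_Ici, mem_Icc]
          constructor
          · rintro ⟨⟨_, hx2⟩, hx3⟩; exact ⟨hx3, hx2⟩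
          · rintro ⟨hx1, hx2⟩; exact ⟨⟨lt_of_lt_of_le hs.1 hx1, hx2⟩, hx1⟩
        rw [h2, integral_Icc_eq_integral_Ioc, ← integral_of_le hs.2]


lemma ftc_Ici (g g' : ℝ → ℝ)
    (hderiv : ∀ x ∈ Set.Ici (0:ℝ), HasDerivWithinAt g (g' x) (Set.Ici 0) x)
    (hcont : ContinuousOn g' (Set.Ici 0)) {v : ℝ} (hv : 0 ≤ v) :
    ∫ x in (0:ℝ)..v, g' x = g v - g 0 := by
  apply intervalIntegral.integral_eq_sub_of_hasDeriv_right_of_le hv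
  · exact ContinuousOn.mono (fun x hx => (hderiv x hx).continuousWithinAt) Icc_subset_Ici_self
  · intro x hx
    exact (hderiv x (le_of_lt hx.1)).mono (fun y hy => le_of_lt (lt_trans hx.1 hy))
  · exact (hcont.mono (by rw [uIcc_of_le hv]; exact Icc_subset_Ici_self)).intervalIntegrable

lemma aux (A B B' F F' Z Z' : ℝ → ℝ) (lam : ℝ)
    (hA : Continuous A) (hB : Continuous B) (hB'c : Continuous B')
    (hFc : Continuous F) (hF'c : Continuous F') (hZc : Continuous Z) (hZ'c : Continuous Z')
    (hZ0 : Z 0 = 1)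
    (hBftc : ∀ v, 0 ≤ v → ∫ x in (0:ℝ)..v, B' x = B v - B 0)
    (hFftc : ∀ v, 0 ≤ v → ∫ x in (0:ℝ)..v, F' x = F v - F 0)
    (hZftc : ∀ v, 0 ≤ v → ∫ x in (0:ℝ)..v, Z' x = Z v - Z 0)
    (hZeq : ∀ τ, 0 ≤ τ → Z' τ + B 0 * Z τ + (∫ s in (0:ℝ)..τ, B' (τ - s) * Z s)
        = -lam ^ 2 * ∫ s in (0:ℝ)..τ, A (τ - s) * Z s)
    {t : ℝ} (ht : 0 ≤ t) :
    lam ^ 2 * ∫ s in (0:ℝ)..t, Z (t - s) * ∫ r in (0:ℝ)..s, A (s - r) * F r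
      = F t - F 0 * (Z t + ∫ r in (0:ℝ)..t, B (t - r) * Z r)
        - ∫ s in (0:ℝ)..t, F' (t - s) * (Z s + ∫ r in (0:ℝ)..s, B (s - r) * Z r) := by
  -- convolution kernel
  set K : ℝ → ℝ := fun τ => ∫ s in (0:ℝ)..τ, A (τ - s) * Z s with hKdef
  have hK : Continuous K := by
    apply intervalIntegral.continuous_parametric_intervalIntegral_of_continuous
      (f := fun τ s => A (τ - s) * Z s) ?_ continuous_id
    exact ((hA.comp (continuous_fst.sub continuous_snd)).mul (hZc.comp continuous_snd))
  set W : ℝ → ℝ := fun τ => Z τ + ∫ r in (0:ℝ)..τ, B (τ - r) * Z r with hWdef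
  have hWeq : ∀ τ, W τ = Z τ + ∫ r in (0:ℝ)..τ, B (τ - r) * Z r := fun τ => rfl
  have hW : Continuous W := by
    apply hZc.add
    apply intervalIntegral.continuous_parametric_intervalIntegral_of_continuous
      (f := fun τ r => B (τ - r) * Z r) ?_ continuous_id
    exact ((hB.comp (continuous_fst.sub continuous_snd)).mul (hZc.comp continuous_snd))
  -- commutativity of the convolution
  have comm : ∀ τ : ℝ, K τ = ∫ u in (0:ℝ)..τ, A u * Z (τ - u) := by
    intro τ
    have h1 : (fun s => A (τ - s) * Z s) = fun s => (fun u => A u * Z (τ - u)) (τ - s) := by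
      funext s; simp [sub_sub_cancel]
    rw [hKdef]
    dsimp only
    rw [h1, intervalIntegral.integral_comp_sub_left (fun u => A u * Z (τ - u)) τ,
      sub_self, sub_zero]
  -- Step 1 : W τ = 1 - lam^2 ∫₀^τ K
  have key : ∀ τ, 0 ≤ τ → W τ = 1 - lam ^ 2 * ∫ σ in (0:ℝ)..τ, K σ := by
    intro τ hτ
    have hconv : Continuous (fun σ => ∫ s in (0:ℝ)..σ, B' (σ - s) * Z s) := by
      apply intervalIntegral.continuous_parametric_intervalIntegral_of_continuous
        (f := fun σ s => B' (σ - s) * Z s) ?_ continuous_id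
      exact ((hB'c.comp (continuous_fst.sub continuous_snd)).mul (hZc.comp continuous_snd))
    have e1 : ∫ σ in (0:ℝ)..τ, (Z' σ + B 0 * Z σ + ∫ s in (0:ℝ)..σ, B' (σ - s) * Z s)
        = ∫ σ in (0:ℝ)..τ, -lam ^ 2 * K σ := by
      apply intervalIntegral.integral_congr
      intro σ hσ
      rw [uIcc_of_le hτ] at hσ
      exact hZeq σ hσ.1
    rw [intervalIntegral.integral_add
        ((by fun_prop : Continuous fun σ => Z' σ + B 0 * Z σ).intervalIntegrable _ _)
        (hconv.intervalIntegrable _ _),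
      intervalIntegral.integral_add (hZ'c.intervalIntegrable _ _)
        ((by fun_prop : Continuous fun σ => B 0 * Z σ).intervalIntegrable _ _),
      hZftc τ hτ, hZ0, intervalIntegral.integral_const_mul,
      intervalIntegral.integral_const_mul] at e1
    -- Fubini on the B' convolution term
    have e2 : ∫ σ in (0:ℝ)..τ, ∫ s in (0:ℝ)..σ, B' (σ - s) * Z s
        = (∫ s in (0:ℝ)..τ, B (τ - s) * Z s) - B 0 * ∫ s in (0:ℝ)..τ, Z s := by
      rw [triangle_swap (fun σ s => B' (σ - s) * Z s)
        ((hB'c.comp (continuous_fst.sub continuous_snd)).mul (hZc.comp continuous_snd)) hτ]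
      have e3 : ∫ s in (0:ℝ)..τ, (∫ σ in s..τ, B' (σ - s) * Z s)
          = ∫ s in (0:ℝ)..τ, (B (τ - s) * Z s - B 0 * Z s) := by
        apply intervalIntegral.integral_congr
        intro s hs
        rw [uIcc_of_le hτ] at hs
        dsimp only
        rw [intervalIntegral.integral_mul_const,
          intervalIntegral.integral_comp_sub_right (fun x => B' x) s, sub_self,
          hBftc (τ - s) (by linarith [hs.2])]
        ring
      rw [e3, intervalIntegral.integral_sub
        ((by fun_prop : Continuous fun s => B (τ - s) * Z s).intervalIntegrable _ _)
        ((by fun_prop : Continuous fun s => B 0 * Z s).intervalIntegrable _ _),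
        intervalIntegral.integral_const_mul]
    rw [e2] at e1
    rw [hWeq]
    linarith
  -- Step 2 : the main convolution rearrangement
  have step2 : ∫ s in (0:ℝ)..t, Z (t - s) * ∫ r in (0:ℝ)..s, A (s - r) * F r
      = ∫ r in (0:ℝ)..t, K (t - r) * F r := by
    calc ∫ s in (0:ℝ)..t, Z (t - s) * ∫ r in (0:ℝ)..s, A (s - r) * F r
        = ∫ σ in (0:ℝ)..t, ∫ r in (0:ℝ)..σ, Z (t - σ) * (A (σ - r) * F r) := by
          apply intervalIntegral.integral_congr
          intro σ hσ
          dsimp only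
          rw [← intervalIntegral.integral_const_mul]
      _ = ∫ r in (0:ℝ)..t, ∫ σ in r..t, Z (t - σ) * (A (σ - r) * F r) := by
          apply triangle_swap (fun σ r => Z (t - σ) * (A (σ - r) * F r)) ?_ ht
          exact (hZc.comp (continuous_const.sub continuous_fst)).mul
            ((hA.comp (continuous_fst.sub continuous_snd)).mul (hFc.comp continuous_snd))
      _ = ∫ r in (0:ℝ)..t, K (t - r) * F r := by
          apply intervalIntegral.integral_congr
          intro r hr
          rw [uIcc_of_le ht] at hr
          dsimp only
          have h1 : (fun σ => Z (t - σ) * (A (σ - r) * F r))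
              = fun σ => ((fun u => A u * Z ((t - r) - u)) (σ - r)) * F r := by
            funext σ
            have : (t - r) - (σ - r) = t - σ := by ring
            dsimp only
            rw [this]; ring
          rw [h1, intervalIntegral.integral_mul_const,
            intervalIntegral.integral_comp_sub_right (fun u => A u * Z ((t - r) - u)) r,
            sub_self, ← comm (t - r)]
  rw [step2]
  -- Step 3 : split F r = F 0 + ∫₀^r F'
  have hprim : Continuous fun r => ∫ u in (0:ℝ)..r, F' u :=
    intervalIntegral.continuous_primitive (fun _ _ => hF'c.intervalIntegrable _ _) 0
  have step3 : ∫ r in (0:ℝ)..t, K (t - r) * F r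
      = (∫ r in (0:ℝ)..t, K (t - r)) * F 0
        + ∫ r in (0:ℝ)..t, K (t - r) * ∫ u in (0:ℝ)..r, F' u := by
    have e1 : ∫ r in (0:ℝ)..t, K (t - r) * F r
        = ∫ r in (0:ℝ)..t, (K (t - r) * F 0 + K (t - r) * ∫ u in (0:ℝ)..r, F' u) := by
      apply intervalIntegral.integral_congr
      intro r hr
      rw [uIcc_of_le ht] at hr
      dsimp only
      rw [hFftc r hr.1]
      ring
    rw [e1, intervalIntegral.integral_add
      ((by fun_prop : Continuous fun r => K (t - r) * F 0).intervalIntegrable _ _)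
      ((by exact (hK.comp (continuous_const.sub continuous_id)).mul hprim :
        Continuous fun r => K (t - r) * ∫ u in (0:ℝ)..r, F' u).intervalIntegrable _ _)]
    congr 1
    rw [intervalIntegral.integral_mul_const]
  rw [step3]
  have h4 : ∫ r in (0:ℝ)..t, K (t - r) = ∫ σ in (0:ℝ)..t, K σ := by
    rw [intervalIntegral.integral_comp_sub_left K t, sub_self, sub_zero]
  -- Step 4 : Fubini on the F' term
  have step4 : ∫ r in (0:ℝ)..t, K (t - r) * ∫ u in (0:ℝ)..r, F' u
      = ∫ u in (0:ℝ)..t, (∫ x in (0:ℝ)..(t - u), K x) * F' u := by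
    calc ∫ r in (0:ℝ)..t, K (t - r) * ∫ u in (0:ℝ)..r, F' u
        = ∫ r in (0:ℝ)..t, ∫ u in (0:ℝ)..r, K (t - r) * F' u := by
          apply intervalIntegral.integral_congr
          intro r hr
          dsimp only
          rw [← intervalIntegral.integral_const_mul]
      _ = ∫ u in (0:ℝ)..t, ∫ r in u..t, K (t - r) * F' u := by
          apply triangle_swap (fun r u => K (t - r) * F' u) ?_ ht
          exact (hK.comp (continuous_const.sub continuous_fst)).mul (hF'c.comp continuous_snd)
      _ = ∫ u in (0:ℝ)..t, (∫ x in (0:ℝ)..(t - u), K x) * F' u := by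
          apply intervalIntegral.integral_congr
          intro u hu
          dsimp only
          rw [intervalIntegral.integral_mul_const,
            intervalIntegral.integral_comp_sub_left K t, sub_self]
  rw [step4, h4]
  -- Step 5 : use `key` and put everything together
  have k1 : lam ^ 2 * ∫ σ in (0:ℝ)..t, K σ = 1 - W t := by
    have := key t ht; linarith
  have k2 : lam ^ 2 * ∫ u in (0:ℝ)..t, (∫ x in (0:ℝ)..(t - u), K x) * F' u
      = ∫ u in (0:ℝ)..t, (1 - W (t - u)) * F' u := by
    rw [← intervalIntegral.integral_const_mul]
    apply intervalIntegral.integral_congr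
    intro u hu
    rw [uIcc_of_le ht] at hu
    dsimp only
    have := key (t - u) (by linarith [hu.2])
    rw [this]; ring
  have h6 : ∫ u in (0:ℝ)..t, (1 - W (t - u)) * F' u
      = (F t - F 0) - ∫ s in (0:ℝ)..t, F' (t - s) * W s := by
    have e : (fun u => (1 - W (t - u)) * F' u) = fun u => F' u - W (t - u) * F' u := by
      funext u; ring
    rw [e, intervalIntegral.integral_sub (hF'c.intervalIntegrable _ _)
      ((by fun_prop : Continuous fun u => W (t - u) * F' u).intervalIntegrable _ _),
      hFftc t ht]
    congr 1
    have e2 : (fun u => W (t - u) * F' u)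
        = fun u => (fun s => F' (t - s) * W s) (t - u) := by
      funext u; dsimp only; rw [sub_sub_cancel]; ring
    rw [e2, intervalIntegral.integral_comp_sub_left (fun s => F' (t - s) * W s) t,
      sub_self, sub_zero]
  calc lam ^ 2 * ((∫ σ in (0:ℝ)..t, K σ) * F 0
        + ∫ u in (0:ℝ)..t, (∫ x in (0:ℝ)..(t - u), K x) * F' u)
      = (lam ^ 2 * ∫ σ in (0:ℝ)..t, K σ) * F 0
        + lam ^ 2 * ∫ u in (0:ℝ)..t, (∫ x in (0:ℝ)..(t - u), K x) * F' u := by ring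
    _ = (1 - W t) * F 0 + ((F t - F 0) - ∫ s in (0:ℝ)..t, F' (t - s) * W s) := by
        rw [k1, k2, h6]
    _ = F t - F 0 * W t - ∫ s in (0:ℝ)..t, F' (t - s) * W s := by ring


/- The integration-by-parts manipulation (formula (3.5)) rewriting the convolution term
in the representation of the solution of the Gurtin–Pipkin mode equation. -/
theorem stmt_1
    (a β β' : ℝ → ℝ) (lam : ℝ) (f f' z z' : ℝ → ℝ)
    (ha : ContinuousOn a (Set.Ici 0))
    (hβcont : ContinuousOn β (Set.Ici 0))
    (hβderiv : ∀ t ∈ Set.Ici (0:ℝ), HasDerivWithinAt β (β' t) (Set.Ici 0) t)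
    (hβ'cont : ContinuousOn β' (Set.Ici 0))
    (hlam : 0 < lam)
    (hfderiv : ∀ t ∈ Set.Ici (0:ℝ), HasDerivWithinAt f (f' t) (Set.Ici 0) t)
    (hf'cont : ContinuousOn f' (Set.Ici 0))
    (hzderiv : ∀ t ∈ Set.Ici (0:ℝ), HasDerivWithinAt z (z' t) (Set.Ici 0) t)
    (hz'cont : ContinuousOn z' (Set.Ici 0))
    (hz0 : z 0 = 1)
    (hzeq : ∀ t ≥ (0:ℝ),
      z' t + β 0 * z t + (∫ s in (0:ℝ)..t, β' (t - s) * z s)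
        = -lam ^ 2 * ∫ s in (0:ℝ)..t, a (t - s) * z s) :
    ∀ t ≥ (0:ℝ),
      lam ^ 2 * ∫ s in (0:ℝ)..t, z (t - s) * ∫ r in (0:ℝ)..s, a (s - r) * f r
        = f t - f 0 * (z t + ∫ r in (0:ℝ)..t, β (t - r) * z r)
          - ∫ s in (0:ℝ)..t, f' (t - s) * (z s + ∫ r in (0:ℝ)..s, β (s - r) * z r) := by
  intro t ht
  have hfcont : ContinuousOn f (Set.Ici 0) := fun x hx => (hfderiv x hx).continuousWithinAt
  have hzcont : ContinuousOn z (Set.Ici 0) := fun x hx => (hzderiv x hx).continuousWithinAt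
  set A := gpExtend a with hAdef
  set B := gpExtend β with hBdef
  set B' := gpExtend β' with hB'def
  set F := gpExtend f with hFdef
  set F' := gpExtend f' with hF'def
  set Z := gpExtend z with hZdef
  set Z' := gpExtend z' with hZ'def
  have hAc : Continuous A := gpExtend_continuous ha
  have hBc : Continuous B := gpExtend_continuous hβcont
  have hB'c : Continuous B' := gpExtend_continuous hβ'cont
  have hFc : Continuous F := gpExtend_continuous hfcont
  have hF'c : Continuous F' := gpExtend_continuous hf'cont
  have hZc : Continuous Z := gpExtend_continuous hzcont
  have hZ'c : Continuous Z' := gpExtend_continuous hz'cont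
  have hZ0E : Z 0 = 1 := by rw [hZdef, gpExtend_eq le_rfl]; exact hz0
  -- transferred fundamental theorems of calculus
  have hBftc : ∀ v, 0 ≤ v → ∫ x in (0:ℝ)..v, B' x = B v - B 0 := by
    intro v hv
    have h1 : ∫ x in (0:ℝ)..v, B' x = ∫ x in (0:ℝ)..v, β' x := by
      apply intervalIntegral.integral_congr
      intro x hx; rw [uIcc_of_le hv] at hx
      exact gpExtend_eq hx.1
    rw [h1, ftc_Ici β β' hβderiv hβ'cont hv, hBdef, gpExtend_eq hv, gpExtend_eq le_rfl]
  have hFftc : ∀ v, 0 ≤ v → ∫ x in (0:ℝ)..v, F' x = F v - F 0 := by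
    intro v hv
    have h1 : ∫ x in (0:ℝ)..v, F' x = ∫ x in (0:ℝ)..v, f' x := by
      apply intervalIntegral.integral_congr
      intro x hx; rw [uIcc_of_le hv] at hx
      exact gpExtend_eq hx.1
    rw [h1, ftc_Ici f f' hfderiv hf'cont hv, hFdef, gpExtend_eq hv, gpExtend_eq le_rfl]
  have hZftc : ∀ v, 0 ≤ v → ∫ x in (0:ℝ)..v, Z' x = Z v - Z 0 := by
    intro v hv
    have h1 : ∫ x in (0:ℝ)..v, Z' x = ∫ x in (0:ℝ)..v, z' x := by
      apply intervalIntegral.integral_congr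
      intro x hx; rw [uIcc_of_le hv] at hx
      exact gpExtend_eq hx.1
    rw [h1, ftc_Ici z z' hzderiv hz'cont hv, hZdef, gpExtend_eq hv, gpExtend_eq le_rfl]
  -- transferred mode equation
  have hZeqE : ∀ τ, 0 ≤ τ → Z' τ + B 0 * Z τ + (∫ s in (0:ℝ)..τ, B' (τ - s) * Z s)
      = -lam ^ 2 * ∫ s in (0:ℝ)..τ, A (τ - s) * Z s := by
    intro τ hτ
    have h1 : ∫ s in (0:ℝ)..τ, B' (τ - s) * Z s = ∫ s in (0:ℝ)..τ, β' (τ - s) * z s := by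
      apply intervalIntegral.integral_congr
      intro s hs; rw [uIcc_of_le hτ] at hs
      dsimp only
      rw [hB'def, hZdef, gpExtend_eq (by linarith [hs.2] : (0:ℝ) ≤ τ - s), gpExtend_eq hs.1]
    have h2 : ∫ s in (0:ℝ)..τ, A (τ - s) * Z s = ∫ s in (0:ℝ)..τ, a (τ - s) * z s := by
      apply intervalIntegral.integral_congr
      intro s hs; rw [uIcc_of_le hτ] at hs
      dsimp only
      rw [hAdef, hZdef, gpExtend_eq (by linarith [hs.2] : (0:ℝ) ≤ τ - s), gpExtend_eq hs.1]
    rw [h1, h2, hZ'def, hBdef, hZdef, gpExtend_eq hτ, gpExtend_eq le_rfl, gpExtend_eq hτ]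
    exact hzeq τ hτ
  have main := aux A B B' F F' Z Z' lam hAc hBc hB'c hFc hF'c hZc hZ'c hZ0E
    hBftc hFftc hZftc hZeqE ht
  -- transfer the conclusion back
  have g1 : ∫ s in (0:ℝ)..t, z (t - s) * ∫ r in (0:ℝ)..s, a (s - r) * f r
      = ∫ s in (0:ℝ)..t, Z (t - s) * ∫ r in (0:ℝ)..s, A (s - r) * F r := by
    apply intervalIntegral.integral_congr
    intro s hs; rw [uIcc_of_le ht] at hs
    dsimp only
    rw [hZdef, gpExtend_eq (by linarith [hs.2] : (0:ℝ) ≤ t - s)]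
    congr 1
    apply intervalIntegral.integral_congr
    intro r hr; rw [uIcc_of_le hs.1] at hr
    dsimp only
    rw [hAdef, hFdef, gpExtend_eq (by linarith [hr.2] : (0:ℝ) ≤ s - r), gpExtend_eq hr.1]
  have g2 : ∫ r in (0:ℝ)..t, β (t - r) * z r = ∫ r in (0:ℝ)..t, B (t - r) * Z r := by
    apply intervalIntegral.integral_congr
    intro r hr; rw [uIcc_of_le ht] at hr
    dsimp only
    rw [hBdef, hZdef, gpExtend_eq (by linarith [hr.2] : (0:ℝ) ≤ t - r), gpExtend_eq hr.1]
  have g3 : ∫ s in (0:ℝ)..t, f' (t - s) * (z s + ∫ r in (0:ℝ)..s, β (s - r) * z r)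
      = ∫ s in (0:ℝ)..t, F' (t - s) * (Z s + ∫ r in (0:ℝ)..s, B (s - r) * Z r) := by
    apply intervalIntegral.integral_congr
    intro s hs; rw [uIcc_of_le ht] at hs
    dsimp only
    rw [hF'def, hZdef, gpExtend_eq (by linarith [hs.2] : (0:ℝ) ≤ t - s), gpExtend_eq hs.1]
    congr 2
    apply intervalIntegral.integral_congr
    intro r hr; rw [uIcc_of_le hs.1] at hr
    dsimp only
    rw [hBdef, gpExtend_eq (by linarith [hr.2] : (0:ℝ) ≤ s - r), gpExtend_eq hr.1]
  rw [← g1, ← g2, ← g3, hZdef, hFdef, gpExtend_eq ht, gpExtend_eq le_rfl,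
    gpExtend_eq ht] at main
  exact main
end

section
/- Let a, β : [0,∞) → ℝ be continuous with β continuously differentiable, let λ > 0, c ∈ ℝ, ξ ∈ ℝ, let g : [0,∞) → ℝ be continuous and set f(t) = ∫₀ᵗ g(s) ds. Suppose z : [0,∞) → ℝ is the mode resolvent, i.e. z is continuously differentiable, z(0) = 1, and for all t ≥ 0: z'(t) + β(0)z(t) + ∫₀ᵗ β'(t−s)z(s) ds = −λ² ∫₀ᵗ a(t−s)z(s) ds. Suppose θ : [0,∞) → ℝ is continuously differentiable with θ(0) = ξ and for all t ≥ 0: θ'(t) + β(0)θ(t) + ∫₀ᵗ β'(t−s)θ(s) ds = −λ² ∫₀ᵗ a(t−s)θ(s) ds + c ∫₀ᵗ a(t−s)f(s) ds. Then for all t ≥ 0: θ(t) = z(t)ξ + (c/λ²) ∫₀ᵗ g(s) ds − (c/λ²) ∫₀ᵗ g(t−s)·(z(s) + ∫₀ˢ β(s−r)z(r) dr) ds. -/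
open MeasureTheory intervalIntegral Set Function

lemma tri_swap (F : ℝ → ℝ → ℝ) (hF : Continuous fun p : ℝ × ℝ => F p.1 p.2)
    {t : ℝ} (ht : 0 ≤ t) :
    (∫ s in (0:ℝ)..t, ∫ r in (0:ℝ)..s, F s r) = ∫ r in (0:ℝ)..t, ∫ s in r..t, F s r := by
  set I := Ioc (0:ℝ) t with hI
  set G : ℝ × ℝ → ℝ := fun p => if p.2 ≤ p.1 then F p.1 p.2 else 0 with hG
  have hGm : Measurable G :=
    Measurable.ite (measurableSet_le measurable_snd measurable_fst) hF.measurable measurable_const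
  have hGint : Integrable G ((volume.restrict I).prod (volume.restrict I)) := by
    rw [Measure.prod_restrict]
    obtain ⟨C, hC⟩ := (isCompact_Icc.prod isCompact_Icc :
      IsCompact (Icc (0:ℝ) t ×ˢ Icc (0:ℝ) t)).exists_bound_of_continuousOn hF.continuousOn
    apply Measure.integrableOn_of_bounded (M := max C 0)
    · rw [Measure.prod_prod]
      exact ENNReal.mul_ne_top measure_Ioc_lt_top.ne measure_Ioc_lt_top.ne
    · exact hGm.aestronglyMeasurable
    · apply ae_restrict_of_forall_mem ((measurableSet_Ioc).prod (measurableSet_Ioc))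
      rintro ⟨s, r⟩ ⟨hs, hr⟩
      by_cases h : r ≤ s
      · simp only [hG, if_pos h, Real.norm_eq_abs]
        exact le_max_of_le_left (hC (s, r) ⟨Ioc_subset_Icc_self hs, Ioc_subset_Icc_self hr⟩)
      · simp [hG, if_neg h]
  have h1 : ∀ s ∈ I, (∫ r in (0:ℝ)..s, F s r) = ∫ r in I, G (s, r) := by
    intro s hs
    have hGs : (fun r => G (s, r)) = (Iic s).indicator (fun r => F s r) := by
      funext r; simp [hG, indicator, Iic]; exact if_congr Iff.rfl rfl rfl
    have hset : Ioc (0:ℝ) s = I ∩ Iic s := by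
      ext r
      simp only [hI, mem_Ioc, mem_inter_iff, mem_Iic]
      constructor
      · rintro ⟨h1, h2⟩; exact ⟨⟨h1, h2.trans hs.2⟩, h2⟩
      · rintro ⟨⟨h1, _⟩, h3⟩; exact ⟨h1, h3⟩
    rw [hGs, setIntegral_indicator measurableSet_Iic,
      intervalIntegral.integral_of_le hs.1.le, hset]
  have h2 : ∀ r ∈ I, (∫ s in I, G (s, r)) = ∫ s in r..t, F s r := by
    intro r hr
    have hGr : (fun s => G (s, r)) = (Ici r).indicator (fun s => F s r) := by
      funext s
      by_cases h : r ≤ s <;> simp [hG, indicator, h]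
    rw [hGr, setIntegral_indicator measurableSet_Ici]
    have : I ∩ Ici r = Icc r t := by
      ext s
      simp only [hI, mem_Ioc, mem_inter_iff, mem_Ici, mem_Icc]
      constructor
      · rintro ⟨⟨_, h2⟩, h3⟩; exact ⟨h3, h2⟩
      · rintro ⟨h1, h2⟩; exact ⟨⟨lt_of_lt_of_le hr.1 h1, h2⟩, h1⟩
    rw [this, integral_Icc_eq_integral_Ioc, ← intervalIntegral.integral_of_le hr.2]
  rw [intervalIntegral.integral_of_le ht, intervalIntegral.integral_of_le ht]
  exact (setIntegral_congr_fun measurableSet_Ioc h1).trans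
    ((integral_integral_swap hGint).trans (setIntegral_congr_fun measurableSet_Ioc h2))

noncomputable def cnv (x y : ℝ → ℝ) (t : ℝ) : ℝ := ∫ s in (0:ℝ)..t, x (t - s) * y s

lemma cnv_cont {x y : ℝ → ℝ} (hx : Continuous x) (hy : Continuous y) :
    Continuous (cnv x y) := by
  have h : Continuous (uncurry fun t s => x (t - s) * y s) := by fun_prop
  exact intervalIntegral.continuous_parametric_intervalIntegral_of_continuous h continuous_id

lemma cnv_intble {x y : ℝ → ℝ} (hx : Continuous x) (hy : Continuous y) (t a b : ℝ) :
    IntervalIntegrable (fun s => x (t - s) * y s) volume a b :=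
  ((hx.comp (continuous_const.sub continuous_id)).mul hy).intervalIntegrable a b

lemma cnv_comm (x y : ℝ → ℝ) (t : ℝ) : cnv x y t = cnv y x t := by
  have h := intervalIntegral.integral_comp_sub_left (a := 0) (b := t)
    (fun u => x u * y (t - u)) t
  simp only [sub_zero, sub_self] at h
  calc cnv x y t = ∫ s in (0:ℝ)..t, (fun u => x u * y (t - u)) (t - s) := by
        apply intervalIntegral.integral_congr; intro s _; simp [sub_sub_cancel]
    _ = ∫ u in (0:ℝ)..t, x u * y (t - u) := h
    _ = cnv y x t := by apply intervalIntegral.integral_congr; intro s _; simp [mul_comm]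

lemma cnv_congr_right {x y y' : ℝ → ℝ} {t : ℝ} (ht : 0 ≤ t)
    (h : ∀ s ∈ Icc (0:ℝ) t, y s = y' s) : cnv x y t = cnv x y' t := by
  apply intervalIntegral.integral_congr
  intro s hs
  rw [uIcc_of_le ht] at hs
  show x (t - s) * y s = x (t - s) * y' s
  rw [h s hs]

lemma cnv_congr_left {x x' y : ℝ → ℝ} {t : ℝ} (ht : 0 ≤ t)
    (h : ∀ s ∈ Icc (0:ℝ) t, x s = x' s) : cnv x y t = cnv x' y t := by
  apply intervalIntegral.integral_congr
  intro s hs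
  rw [uIcc_of_le ht] at hs
  show x (t - s) * y s = x' (t - s) * y s
  rw [h (t - s) ⟨by linarith [hs.2], by linarith [hs.1]⟩]

lemma cnv_add_right {x y y' : ℝ → ℝ} (hx : Continuous x) (hy : Continuous y)
    (hy' : Continuous y') (t : ℝ) :
    cnv x (fun s => y s + y' s) t = cnv x y t + cnv x y' t := by
  unfold cnv
  rw [← intervalIntegral.integral_add (cnv_intble hx hy t 0 t) (cnv_intble hx hy' t 0 t)]
  apply intervalIntegral.integral_congr
  intro s _; ring

lemma cnv_smul_right {x y : ℝ → ℝ} (d : ℝ) (t : ℝ) :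
    cnv x (fun s => d * y s) t = d * cnv x y t := by
  unfold cnv
  rw [← intervalIntegral.integral_const_mul]
  apply intervalIntegral.integral_congr
  intro s _; ring

lemma cnv_assoc {x y w : ℝ → ℝ} (hx : Continuous x) (hy : Continuous y)
    (hw : Continuous w) {t : ℝ} (ht : 0 ≤ t) :
    cnv (cnv x y) w t = cnv x (cnv y w) t := by
  have key := tri_swap (fun σ s => x (t - σ) * y (σ - s) * w s) (by fun_prop) ht
  calc cnv (cnv x y) w t
      = ∫ s in (0:ℝ)..t, ∫ σ in s..t, x (t - σ) * y (σ - s) * w s := by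
        apply intervalIntegral.integral_congr
        intro s _
        show (∫ r in (0:ℝ)..(t - s), x (t - s - r) * y r) * w s
          = ∫ σ in s..t, x (t - σ) * y (σ - s) * w s
        rw [← intervalIntegral.integral_mul_const]
        have h2 := intervalIntegral.integral_comp_sub_right (a := s) (b := t)
          (fun r => x (t - s - r) * y r * w s) s
        simp only [sub_self] at h2
        rw [← h2]
        apply intervalIntegral.integral_congr
        intro σ _
        show x (t - s - (σ - s)) * y (σ - s) * w s = x (t - σ) * y (σ - s) * w s
        have : t - s - (σ - s) = t - σ := by ring
        rw [this]
    _ = ∫ σ in (0:ℝ)..t, ∫ s in (0:ℝ)..σ, x (t - σ) * y (σ - s) * w s := key.symm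
    _ = cnv x (cnv y w) t := by
        apply intervalIntegral.integral_congr
        intro σ _
        simp only [mul_assoc]
        rw [intervalIntegral.integral_const_mul]
        rfl

lemma cnv_integral {k x : ℝ → ℝ} (hk : Continuous k) (hx : Continuous x) {t : ℝ} (ht : 0 ≤ t) :
    (∫ s in (0:ℝ)..t, cnv k x s) = cnv (fun u => ∫ v in (0:ℝ)..u, k v) x t := by
  have key := tri_swap (fun s r => k (s - r) * x r) (by fun_prop) ht
  rw [show (∫ s in (0:ℝ)..t, cnv k x s) = ∫ s in (0:ℝ)..t, ∫ r in (0:ℝ)..s, k (s-r) * x r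
    from rfl, key]
  apply intervalIntegral.integral_congr
  intro r _
  show _ = (fun u => ∫ v in (0:ℝ)..u, k v) (t - r) * x r
  rw [← intervalIntegral.integral_mul_const]
  have h2 := intervalIntegral.integral_comp_sub_right (a := r) (b := t)
    (fun v => k v * x r) r
  simp only [sub_self] at h2
  rw [← h2]

lemma ftc2 {φ φ' : ℝ → ℝ} (hder : ∀ s ∈ Ici (0:ℝ), HasDerivWithinAt φ (φ' s) (Ici 0) s)
    (hcont' : ContinuousOn φ' (Ici 0)) {t : ℝ} (ht : 0 ≤ t) :
    ∫ s in (0:ℝ)..t, φ' s = φ t - φ 0 := by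
  apply intervalIntegral.integral_eq_sub_of_hasDeriv_right_of_le ht
  · intro s hs
    exact ((hder s hs.1).continuousWithinAt).mono (Icc_subset_Ici_self)
  · intro s hs
    exact ((hder s hs.1.le).hasDerivAt (Ici_mem_nhds hs.1)).hasDerivWithinAt
  · exact (hcont'.mono (by rw [uIcc_of_le ht]; exact Icc_subset_Ici_self)).intervalIntegrable

lemma cnv_sub_right {x y y' : ℝ → ℝ} (hx : Continuous x) (hy : Continuous y)
    (hy' : Continuous y') (t : ℝ) :
    cnv x (fun s => y s - y' s) t = cnv x y t - cnv x y' t := by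
  unfold cnv
  rw [← intervalIntegral.integral_sub (cnv_intble hx hy t 0 t) (cnv_intble hx hy' t 0 t)]
  apply intervalIntegral.integral_congr
  intro s _
  show x (t - s) * (y s - y' s) = x (t - s) * y s - x (t - s) * y' s
  ring

lemma cnv_sub_const {x y : ℝ → ℝ} (hx : Continuous x) (hy : Continuous y) (d t : ℝ) :
    cnv (fun u => x u - d) y t = cnv x y t - d * ∫ s in (0:ℝ)..t, y s := by
  unfold cnv
  rw [← intervalIntegral.integral_const_mul,
    ← intervalIntegral.integral_sub (g := fun s => d * y s) (cnv_intble hx hy t 0 t)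
      ((continuous_const.mul hy).intervalIntegrable 0 t)]
  apply intervalIntegral.integral_congr
  intro s _
  show (x (t - s) - d) * y s = x (t - s) * y s - d * y s
  ring

lemma cnv_add_left_smul {x x' y : ℝ → ℝ} (hx : Continuous x) (hx' : Continuous x')
    (hy : Continuous y) (d t : ℝ) :
    cnv (fun v => x v + d * x' v) y t = cnv x y t + d * cnv x' y t := by
  unfold cnv
  have hI2 : IntervalIntegrable (fun s => d * (x' (t - s) * y s)) volume 0 t := by
    apply Continuous.intervalIntegrable; fun_prop
  rw [← intervalIntegral.integral_const_mul,
    ← intervalIntegral.integral_add (cnv_intble hx hy t 0 t) hI2]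
  apply intervalIntegral.integral_congr
  intro s _
  show (x (t - s) + d * x' (t - s)) * y s = x (t - s) * y s + d * (x' (t - s) * y s)
  ring

lemma cnv_one_left (y : ℝ → ℝ) (u : ℝ) :
    cnv (fun _ => 1) y u = ∫ v in (0:ℝ)..u, y v := by
  unfold cnv; simp

lemma cnv_one_right (x : ℝ → ℝ) (u : ℝ) :
    cnv x (fun _ => 1) u = ∫ v in (0:ℝ)..u, x v := by
  unfold cnv
  have h := intervalIntegral.integral_comp_sub_left (a := (0:ℝ)) (b := u) x u
  simp only [sub_zero, sub_self] at h
  simp only [mul_one]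
  exact h

lemma integrated_eq {eb eb' ex ex' R : ℝ → ℝ}
    (heb : Continuous eb) (heb' : Continuous eb') (hex : Continuous ex)
    (hex' : Continuous ex') (hR : Continuous R)
    (hbftc : ∀ u : ℝ, 0 ≤ u → ∫ v in (0:ℝ)..u, eb' v = eb u - eb 0)
    (hxftc : ∀ u : ℝ, 0 ≤ u → ∫ v in (0:ℝ)..u, ex' v = ex u - ex 0)
    (heq : ∀ s : ℝ, 0 ≤ s → ex' s + eb 0 * ex s + cnv eb' ex s = R s)
    {t : ℝ} (ht : 0 ≤ t) :
    ex t - ex 0 + cnv eb ex t = ∫ s in (0:ℝ)..t, R s := by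
  have h1 : ∫ s in (0:ℝ)..t, (ex' s + eb 0 * ex s + cnv eb' ex s) = ∫ s in (0:ℝ)..t, R s := by
    apply intervalIntegral.integral_congr
    intro s hs
    rw [uIcc_of_le ht] at hs
    exact heq s hs.1
  have hc : Continuous (cnv eb' ex) := cnv_cont heb' hex
  rw [intervalIntegral.integral_add (f := fun s => ex' s + eb 0 * ex s)
      ((hex'.add (continuous_const.mul hex)).intervalIntegrable 0 t)
      (hc.intervalIntegrable 0 t),
    intervalIntegral.integral_add (g := fun s => eb 0 * ex s) (hex'.intervalIntegrable 0 t)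
      ((continuous_const.mul hex).intervalIntegrable 0 t)] at h1
  rw [hxftc t ht, intervalIntegral.integral_const_mul, cnv_integral heb' hex ht] at h1
  have h2 : cnv (fun u => ∫ v in (0:ℝ)..u, eb' v) ex t
      = cnv eb ex t - eb 0 * ∫ s in (0:ℝ)..t, ex s := by
    rw [← cnv_sub_const heb hex (eb 0) t]
    apply cnv_congr_left ht
    intro u hu
    exact hbftc u hu.1
  rw [h2] at h1
  linarith [h1]

theorem stmt_2
    (a β β' : ℝ → ℝ) (lam c ξ : ℝ) (g z z' θ θ' : ℝ → ℝ)
    (ha : ContinuousOn a (Set.Ici 0))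
    (hβcont : ContinuousOn β (Set.Ici 0))
    (hβderiv : ∀ t ∈ Set.Ici (0:ℝ), HasDerivWithinAt β (β' t) (Set.Ici 0) t)
    (hβ'cont : ContinuousOn β' (Set.Ici 0))
    (hlam : 0 < lam)
    (hg : ContinuousOn g (Set.Ici 0))
    (f : ℝ → ℝ) (hf : ∀ t, f t = ∫ s in (0:ℝ)..t, g s)
    (hzderiv : ∀ t ∈ Set.Ici (0:ℝ), HasDerivWithinAt z (z' t) (Set.Ici 0) t)
    (hz'cont : ContinuousOn z' (Set.Ici 0))
    (hz0 : z 0 = 1)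
    (hzeq : ∀ t ≥ (0:ℝ),
      z' t + β 0 * z t + (∫ s in (0:ℝ)..t, β' (t - s) * z s)
        = -lam ^ 2 * ∫ s in (0:ℝ)..t, a (t - s) * z s)
    (hθderiv : ∀ t ∈ Set.Ici (0:ℝ), HasDerivWithinAt θ (θ' t) (Set.Ici 0) t)
    (hθ'cont : ContinuousOn θ' (Set.Ici 0))
    (hθ0 : θ 0 = ξ)
    (hθeq : ∀ t ≥ (0:ℝ),
      θ' t + β 0 * θ t + (∫ s in (0:ℝ)..t, β' (t - s) * θ s)
        = -lam ^ 2 * (∫ s in (0:ℝ)..t, a (t - s) * θ s)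
          + c * ∫ s in (0:ℝ)..t, a (t - s) * f s) :
    ∀ t ≥ (0:ℝ),
      θ t = z t * ξ + (c / lam ^ 2) * (∫ s in (0:ℝ)..t, g s)
        - (c / lam ^ 2) *
            ∫ s in (0:ℝ)..t, g (t - s) * (z s + ∫ r in (0:ℝ)..s, β (s - r) * z r) := by
  have hmax : ∀ v : ℝ, 0 ≤ v → max v 0 = v := fun v hv => max_eq_left hv
  have hmc : Continuous (fun v : ℝ => max v 0) := continuous_id.max continuous_const
  have hmem : ∀ v : ℝ, max v 0 ∈ Set.Ici (0:ℝ) := fun v => mem_Ici.mpr (le_max_right _ _)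
  set ea : ℝ → ℝ := fun v => a (max v 0) with hea_def
  set eb : ℝ → ℝ := fun v => β (max v 0) with heb_def
  set eb' : ℝ → ℝ := fun v => β' (max v 0) with heb'_def
  set eg : ℝ → ℝ := fun v => g (max v 0) with heg_def
  set ez : ℝ → ℝ := fun v => z (max v 0) with hez_def
  set ez' : ℝ → ℝ := fun v => z' (max v 0) with hez'_def
  set eth : ℝ → ℝ := fun v => θ (max v 0) with heth_def
  set eth' : ℝ → ℝ := fun v => θ' (max v 0) with heth'_def
  have hea : Continuous ea := ha.comp_continuous hmc hmem
  have heb : Continuous eb := hβcont.comp_continuous hmc hmem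
  have heb' : Continuous eb' := hβ'cont.comp_continuous hmc hmem
  have heg : Continuous eg := hg.comp_continuous hmc hmem
  have hez : Continuous ez := by
    have : ContinuousOn z (Set.Ici 0) :=
      fun v hv => ((hzderiv v hv).continuousWithinAt)
    exact this.comp_continuous hmc hmem
  have hez' : Continuous ez' := hz'cont.comp_continuous hmc hmem
  have heth : Continuous eth := by
    have : ContinuousOn θ (Set.Ici 0) :=
      fun v hv => ((hθderiv v hv).continuousWithinAt)
    exact this.comp_continuous hmc hmem
  have heth' : Continuous eth' := hθ'cont.comp_continuous hmc hmem
  set eA : ℝ → ℝ := fun u => ∫ v in (0:ℝ)..u, ea v with heA_def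
  have heA : Continuous eA :=
    intervalIntegral.continuous_primitive (fun a b => hea.intervalIntegrable a b) 0
  set ef : ℝ → ℝ := fun u => ∫ v in (0:ℝ)..u, eg v with hef_def
  have hef : Continuous ef :=
    intervalIntegral.continuous_primitive (fun a b => heg.intervalIntegrable a b) 0
  set P : ℝ → ℝ := cnv eA ez with hP_def
  have hPc : Continuous P := cnv_cont heA hez
  -- FTC facts transported to the extensions
  have hbftc : ∀ u : ℝ, 0 ≤ u → ∫ v in (0:ℝ)..u, eb' v = eb u - eb 0 := by
    intro u hu
    have h1 : ∫ v in (0:ℝ)..u, eb' v = ∫ v in (0:ℝ)..u, β' v := by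
      apply intervalIntegral.integral_congr
      intro v hv
      rw [uIcc_of_le hu] at hv
      show β' (max v 0) = β' v
      rw [hmax v hv.1]
    rw [h1, ftc2 hβderiv hβ'cont hu]
    show β u - β 0 = β (max u 0) - β (max 0 0)
    rw [hmax u hu, max_self]
  have hthftc : ∀ u : ℝ, 0 ≤ u → ∫ v in (0:ℝ)..u, eth' v = eth u - eth 0 := by
    intro u hu
    have h1 : ∫ v in (0:ℝ)..u, eth' v = ∫ v in (0:ℝ)..u, θ' v := by
      apply intervalIntegral.integral_congr
      intro v hv
      rw [uIcc_of_le hu] at hv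
      show θ' (max v 0) = θ' v
      rw [hmax v hv.1]
    rw [h1, ftc2 hθderiv hθ'cont hu]
    show θ u - θ 0 = θ (max u 0) - θ (max 0 0)
    rw [hmax u hu, max_self]
  have hzftc : ∀ u : ℝ, 0 ≤ u → ∫ v in (0:ℝ)..u, ez' v = ez u - ez 0 := by
    intro u hu
    have h1 : ∫ v in (0:ℝ)..u, ez' v = ∫ v in (0:ℝ)..u, z' v := by
      apply intervalIntegral.integral_congr
      intro v hv
      rw [uIcc_of_le hu] at hv
      show z' (max v 0) = z' v
      rw [hmax v hv.1]
    rw [h1, ftc2 hzderiv hz'cont hu]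
    show z u - z 0 = z (max u 0) - z (max 0 0)
    rw [hmax u hu, max_self]
  have heb0 : eb 0 = β 0 := by show β (max 0 0) = β 0; rw [max_self]
  have heth0 : eth 0 = ξ := by show θ (max 0 0) = ξ; rw [max_self]; exact hθ0
  have hez0 : ez 0 = 1 := by show z (max 0 0) = 1; rw [max_self]; exact hz0
  -- integrated equation for θ
  have Ith : ∀ T : ℝ, 0 ≤ T →
      eth T + cnv eb eth T + lam ^ 2 * cnv eA eth T = ξ + c * cnv eA ef T := by
    intro T hT
    have key := integrated_eq (R := fun s => -lam ^ 2 * cnv ea eth s + c * cnv ea ef s)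
      heb heb' heth heth'
      (((continuous_const.mul (cnv_cont hea heth)).add
        (continuous_const.mul (cnv_cont hea hef))))
      hbftc hthftc ?_ hT
    · have hsplit : (∫ s in (0:ℝ)..T, (-lam ^ 2 * cnv ea eth s + c * cnv ea ef s))
          = -lam ^ 2 * cnv eA eth T + c * cnv eA ef T := by
        rw [intervalIntegral.integral_add (f := fun s => -lam ^ 2 * cnv ea eth s)
            (g := fun s => c * cnv ea ef s)
            ((continuous_const.mul (cnv_cont hea heth)).intervalIntegrable 0 T)
            ((continuous_const.mul (cnv_cont hea hef)).intervalIntegrable 0 T),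
          intervalIntegral.integral_const_mul, intervalIntegral.integral_const_mul,
          cnv_integral hea heth hT, cnv_integral hea hef hT]
      rw [hsplit, heth0] at key
      linarith [key]
    · intro s hs
      have e1 : eth' s = θ' s := by show θ' (max s 0) = θ' s; rw [hmax s hs]
      have e3 : eth s = θ s := by show θ (max s 0) = θ s; rw [hmax s hs]
      have e4 : cnv eb' eth s = ∫ r in (0:ℝ)..s, β' (s - r) * θ r := by
        apply intervalIntegral.integral_congr
        intro r hr
        rw [uIcc_of_le hs] at hr
        show β' (max (s - r) 0) * θ (max r 0) = β' (s - r) * θ r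
        rw [hmax _ (by linarith [hr.2] : (0:ℝ) ≤ s - r), hmax r hr.1]
      have e5 : cnv ea eth s = ∫ r in (0:ℝ)..s, a (s - r) * θ r := by
        apply intervalIntegral.integral_congr
        intro r hr
        rw [uIcc_of_le hs] at hr
        show a (max (s - r) 0) * θ (max r 0) = a (s - r) * θ r
        rw [hmax _ (by linarith [hr.2] : (0:ℝ) ≤ s - r), hmax r hr.1]
      have e6 : cnv ea ef s = ∫ r in (0:ℝ)..s, a (s - r) * f r := by
        apply intervalIntegral.integral_congr
        intro r hr
        rw [uIcc_of_le hs] at hr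
        show a (max (s - r) 0) * ef r = a (s - r) * f r
        have hefr : ef r = f r := by
          show (∫ v in (0:ℝ)..r, eg v) = f r
          rw [hf r]
          apply intervalIntegral.integral_congr
          intro v hv
          rw [uIcc_of_le hr.1] at hv
          show g (max v 0) = g v
          rw [hmax v hv.1]
        rw [hmax _ (by linarith [hr.2] : (0:ℝ) ≤ s - r), hefr]
      show eth' s + eb 0 * eth s + cnv eb' eth s
        = -lam ^ 2 * cnv ea eth s + c * cnv ea ef s
      rw [e1, e3, e4, e5, e6, heb0]
      exact hθeq s hs
  -- integrated equation for z
  have Iz : ∀ T : ℝ, 0 ≤ T →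
      ez T + cnv eb ez T + lam ^ 2 * cnv eA ez T = 1 := by
    intro T hT
    have key := integrated_eq (R := fun s => -lam ^ 2 * cnv ea ez s)
      heb heb' hez hez'
      (continuous_const.mul (cnv_cont hea hez))
      hbftc hzftc ?_ hT
    · have hsplit : (∫ s in (0:ℝ)..T, (-lam ^ 2 * cnv ea ez s))
          = -lam ^ 2 * cnv eA ez T := by
        rw [intervalIntegral.integral_const_mul, cnv_integral hea hez hT]
      rw [hsplit, hez0] at key
      linarith [key]
    · intro s hs
      have e1 : ez' s = z' s := by show z' (max s 0) = z' s; rw [hmax s hs]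
      have e3 : ez s = z s := by show z (max s 0) = z s; rw [hmax s hs]
      have e4 : cnv eb' ez s = ∫ r in (0:ℝ)..s, β' (s - r) * z r := by
        apply intervalIntegral.integral_congr
        intro r hr
        rw [uIcc_of_le hs] at hr
        show β' (max (s - r) 0) * z (max r 0) = β' (s - r) * z r
        rw [hmax _ (by linarith [hr.2] : (0:ℝ) ≤ s - r), hmax r hr.1]
      have e5 : cnv ea ez s = ∫ r in (0:ℝ)..s, a (s - r) * z r := by
        apply intervalIntegral.integral_congr
        intro r hr
        rw [uIcc_of_le hs] at hr
        show a (max (s - r) 0) * z (max r 0) = a (s - r) * z r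
        rw [hmax _ (by linarith [hr.2] : (0:ℝ) ≤ s - r), hmax r hr.1]
      show ez' s + eb 0 * ez s + cnv eb' ez s = -lam ^ 2 * cnv ea ez s
      rw [e1, e3, e4, e5, heb0]
      exact hzeq s hs
  -- the P equation
  have hc3 : ∀ s : ℝ, 0 ≤ s →
      P s + cnv eb P s + lam ^ 2 * cnv eA P s = ∫ v in (0:ℝ)..s, eA v := by
    intro s hs
    rw [hP_def]
    have h1 : cnv eb (cnv eA ez) s = cnv eA (cnv eb ez) s := by
      rw [← cnv_assoc heb heA hez hs,
        show cnv eb eA = cnv eA eb from funext fun u_ => cnv_comm _ _ u_,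
        cnv_assoc heA heb hez hs]
    have h3 : cnv eA (fun r => ez r + (cnv eb ez r + lam ^ 2 * cnv eA ez r)) s
        = cnv eA ez s + (cnv eA (cnv eb ez) s + lam ^ 2 * cnv eA (cnv eA ez) s) := by
      calc cnv eA (fun r => ez r + (cnv eb ez r + lam ^ 2 * cnv eA ez r)) s
          = cnv eA ez s + cnv eA (fun r => cnv eb ez r + lam ^ 2 * cnv eA ez r) s :=
            cnv_add_right heA hez
              ((cnv_cont heb hez).add (continuous_const.mul (cnv_cont heA hez))) s
        _ = cnv eA ez s + (cnv eA (cnv eb ez) s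
              + cnv eA (fun r => lam ^ 2 * cnv eA ez r) s) := by
            rw [cnv_add_right (y' := fun r => lam ^ 2 * cnv eA ez r) heA (cnv_cont heb hez)
              (continuous_const.mul (cnv_cont heA hez)) s]
        _ = cnv eA ez s + (cnv eA (cnv eb ez) s + lam ^ 2 * cnv eA (cnv eA ez) s) := by
            rw [cnv_smul_right]
    have h4 : cnv eA (fun r => ez r + (cnv eb ez r + lam ^ 2 * cnv eA ez r)) s
        = cnv eA (fun _ => (1:ℝ)) s := by
      apply cnv_congr_right hs
      intro r hr
      have hIz := Iz r hr.1
      linarith [hIz]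
    rw [h1]
    have h5 := cnv_one_right eA s
    linarith [h3, h4, h5]
  -- transporting hc3 through cnv eg
  have hC : ∀ T : ℝ, 0 ≤ T →
      cnv eg P T + cnv eb (cnv eg P) T + lam ^ 2 * cnv eA (cnv eg P) T
        = cnv eA ef T := by
    intro T hT
    have h1 : cnv eb (cnv eg P) T = cnv eg (cnv eb P) T := by
      rw [← cnv_assoc heb heg hPc hT,
        show cnv eb eg = cnv eg eb from funext fun u_ => cnv_comm _ _ u_,
        cnv_assoc heg heb hPc hT]
    have h2 : cnv eA (cnv eg P) T = cnv eg (cnv eA P) T := by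
      rw [← cnv_assoc heA heg hPc hT,
        show cnv eA eg = cnv eg eA from funext fun u_ => cnv_comm _ _ u_,
        cnv_assoc heg heA hPc hT]
    have h3 : cnv eg (fun r => P r + (cnv eb P r + lam ^ 2 * cnv eA P r)) T
        = cnv eg P T + (cnv eg (cnv eb P) T + lam ^ 2 * cnv eg (cnv eA P) T) := by
      calc cnv eg (fun r => P r + (cnv eb P r + lam ^ 2 * cnv eA P r)) T
          = cnv eg P T + cnv eg (fun r => cnv eb P r + lam ^ 2 * cnv eA P r) T :=
            cnv_add_right heg hPc
              ((cnv_cont heb hPc).add (continuous_const.mul (cnv_cont heA hPc))) T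
        _ = cnv eg P T + (cnv eg (cnv eb P) T
              + cnv eg (fun r => lam ^ 2 * cnv eA P r) T) := by
            rw [cnv_add_right (y' := fun r => lam ^ 2 * cnv eA P r) heg (cnv_cont heb hPc)
              (continuous_const.mul (cnv_cont heA hPc)) T]
        _ = cnv eg P T + (cnv eg (cnv eb P) T + lam ^ 2 * cnv eg (cnv eA P) T) := by
            rw [cnv_smul_right]
    have h4 : cnv eg (fun r => P r + (cnv eb P r + lam ^ 2 * cnv eA P r)) T
        = cnv eg (fun u => ∫ v in (0:ℝ)..u, eA v) T := by
      apply cnv_congr_right hT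
      intro r hr
      rw [← add_assoc]
      exact hc3 r hr.1
    have h5 : cnv eg (fun u => ∫ v in (0:ℝ)..u, eA v) T = cnv eA ef T := by
      have e1 : (fun u => ∫ v in (0:ℝ)..u, eA v) = cnv (fun _ => (1:ℝ)) eA :=
        funext fun u_ => (cnv_one_left eA u_).symm
      rw [e1, ← cnv_assoc heg continuous_const heA hT,
        show cnv eg (fun _ => (1:ℝ)) = ef from funext fun u_ => cnv_one_right eg u_,
        cnv_comm ef eA T]
    rw [h1, h2]
    linarith [h3, h4, h5]
  -- the difference function
  set uu : ℝ → ℝ := fun v => eth v - (ξ * ez v + c * cnv eg P v) with huu_def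
  have huuc : Continuous uu :=
    heth.sub ((continuous_const.mul hez).add (continuous_const.mul (cnv_cont heg hPc)))
  have huueq : ∀ T : ℝ, 0 ≤ T →
      uu T + cnv eb uu T + lam ^ 2 * cnv eA uu T = 0 := by
    intro T hT
    have hsplit : ∀ k : ℝ → ℝ, Continuous k →
        cnv k uu T = cnv k eth T - (ξ * cnv k ez T + c * cnv k (cnv eg P) T) := by
      intro k hk
      rw [huu_def]
      calc cnv k (fun v => eth v - (ξ * ez v + c * cnv eg P v)) T
          = cnv k eth T - cnv k (fun v => ξ * ez v + c * cnv eg P v) T :=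
            cnv_sub_right hk heth
              ((continuous_const.mul hez).add
                (continuous_const.mul (cnv_cont heg hPc))) T
        _ = cnv k eth T - (cnv k (fun v => ξ * ez v) T
              + cnv k (fun v => c * cnv eg P v) T) := by
            rw [cnv_add_right (y := fun v => ξ * ez v) (y' := fun v => c * cnv eg P v) hk
              (continuous_const.mul hez)
              (continuous_const.mul (cnv_cont heg hPc)) T]
        _ = cnv k eth T - (ξ * cnv k ez T + c * cnv k (cnv eg P) T) := by
            rw [cnv_smul_right, cnv_smul_right]
    have huT : uu T = eth T - (ξ * ez T + c * cnv eg P T) := by rw [huu_def]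
    rw [huT, hsplit eb heb, hsplit eA heA]
    have i1 := Ith T hT
    have i2 := Iz T hT
    have i3 := hC T hT
    linear_combination i1 - ξ * i2 - c * i3
  -- Gronwall: uu vanishes
  have huu0 : ∀ T : ℝ, 0 ≤ T → uu T = 0 := by
    intro T hT
    set ek : ℝ → ℝ := fun v => eb v + lam ^ 2 * eA v with hek_def
    have hekc : Continuous ek := heb.add (continuous_const.mul heA)
    have hueq : ∀ s : ℝ, 0 ≤ s → uu s = -cnv ek uu s := by
      intro s hs
      have h := huueq s hs
      have h2 : cnv ek uu s = cnv eb uu s + lam ^ 2 * cnv eA uu s := by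
        rw [hek_def]
        exact cnv_add_left_smul heb heA huuc (lam ^ 2) s
      linarith [h, h2]
    obtain ⟨M, hM⟩ := (isCompact_Icc :
      IsCompact (Icc (0:ℝ) T)).exists_bound_of_continuousOn hekc.continuousOn
    set V : ℝ → ℝ := fun v => ∫ s in (0:ℝ)..v, |uu s| with hV_def
    have hVc : Continuous V :=
      intervalIntegral.continuous_primitive (fun a b => huuc.abs.intervalIntegrable a b) 0
    have hVd : ∀ v : ℝ, HasDerivAt V (|uu v|) v := by
      intro v
      exact intervalIntegral.integral_hasDerivAt_right (huuc.abs.intervalIntegrable 0 v)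
        (huuc.abs.stronglyMeasurable.stronglyMeasurableAtFilter)
        huuc.abs.continuousAt
    have hVnn : ∀ v : ℝ, 0 ≤ v → 0 ≤ V v := fun v hv =>
      intervalIntegral.integral_nonneg hv fun s _ => abs_nonneg _
    have hbnd : ∀ s : ℝ, 0 ≤ s → s ≤ T → |uu s| ≤ M * V s := by
      intro s hs hsT
      rw [hueq s hs, abs_neg]
      have step1 : |cnv ek uu s| ≤ ∫ r in (0:ℝ)..s, |ek (s - r) * uu r| :=
        intervalIntegral.abs_integral_le_integral_abs hs
      have step2 : (∫ r in (0:ℝ)..s, |ek (s - r) * uu r|)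
          ≤ ∫ r in (0:ℝ)..s, M * |uu r| := by
        apply intervalIntegral.integral_mono_on (f := fun r => |ek (s - r) * uu r|)
          (g := fun r => M * |uu r|) hs
          (((hekc.comp (continuous_const.sub continuous_id)).mul huuc).abs.intervalIntegrable 0 s)
          ((continuous_const.mul huuc.abs).intervalIntegrable 0 s)
        intro r hr
        rw [abs_mul]
        apply mul_le_mul_of_nonneg_right _ (abs_nonneg _)
        have hmem2 : s - r ∈ Icc (0:ℝ) T := ⟨by linarith [hr.2], by linarith [hr.1]⟩
        have := hM (s - r) hmem2
        simpa [Real.norm_eq_abs] using this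
      have step3 : (∫ r in (0:ℝ)..s, M * |uu r|) = M * V s := by
        rw [intervalIntegral.integral_const_mul, hV_def]
      linarith [step1, step2, step3]
    have hgron := norm_le_gronwallBound_of_norm_deriv_right_le (f := V)
      (f' := fun s => |uu s|) (δ := 0) (K := M) (ε := 0) (a := 0) (b := T)
      hVc.continuousOn (fun s _ => (hVd s).hasDerivWithinAt) (by simp [hV_def])
      (fun s hs => by
        have h1 : ‖|uu s|‖ = |uu s| := by simp [Real.norm_eq_abs, abs_abs]
        have h2 : ‖V s‖ = V s := by
          rw [Real.norm_eq_abs, abs_of_nonneg (hVnn s hs.1)]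
        rw [h1, h2, add_zero]
        exact hbnd s hs.1 hs.2.le)
    have hVT : V T = 0 := by
      have h := hgron T ⟨hT, le_rfl⟩
      rw [gronwallBound_ε0_δ0] at h
      have h2 := hVnn T hT
      rw [Real.norm_eq_abs, abs_of_nonneg h2] at h
      linarith
    have := hbnd T hT le_rfl
    rw [hVT, mul_zero] at this
    exact abs_nonpos_iff.mp this
  -- conclusion
  intro t ht
  have h0 := huu0 t ht
  have e1 : eth t = θ t := by show θ (max t 0) = θ t; rw [hmax t ht]
  have e2 : ez t = z t := by show z (max t 0) = z t; rw [hmax t ht]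
  have hfinal : θ t = ξ * z t + c * cnv eg P t := by
    rw [huu_def] at h0
    simp only at h0
    rw [e1, e2] at h0
    linarith
  have hsplit2 : (∫ s in (0:ℝ)..t, g (t - s) * (z s + ∫ r in (0:ℝ)..s, β (s - r) * z r))
      = (∫ s in (0:ℝ)..t, g s) - lam ^ 2 * cnv eg P t := by
    have e : ∀ s ∈ Icc (0:ℝ) t,
        g (t - s) * (z s + ∫ r in (0:ℝ)..s, β (s - r) * z r)
          = eg (t - s) - lam ^ 2 * (eg (t - s) * P s) := by
      intro s hs
      have hinner : (∫ r in (0:ℝ)..s, β (s - r) * z r) = cnv eb ez s := by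
        apply intervalIntegral.integral_congr
        intro r hr
        rw [uIcc_of_le hs.1] at hr
        show β (s - r) * z r = β (max (s - r) 0) * z (max r 0)
        rw [hmax _ (by linarith [hr.2] : (0:ℝ) ≤ s - r), hmax r hr.1]
      have hzs : z s = ez s := by show z s = z (max s 0); rw [hmax s hs.1]
      have hIz := Iz s hs.1
      have hz1 : z s + (∫ r in (0:ℝ)..s, β (s - r) * z r) = 1 - lam ^ 2 * P s := by
        rw [hinner, hzs, hP_def]
        linarith [hIz]
      have hgts : g (t - s) = eg (t - s) := by
        show g (t - s) = g (max (t - s) 0)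
        rw [hmax _ (by linarith [hs.2] : (0:ℝ) ≤ t - s)]
      rw [hz1, hgts]
      ring
    have hcongr : (∫ s in (0:ℝ)..t, g (t - s) * (z s + ∫ r in (0:ℝ)..s, β (s - r) * z r))
        = ∫ s in (0:ℝ)..t, (eg (t - s) - lam ^ 2 * (eg (t - s) * P s)) := by
      apply intervalIntegral.integral_congr
      intro s hs
      rw [uIcc_of_le ht] at hs
      exact e s hs
    have hI1 : IntervalIntegrable (fun s => eg (t - s)) volume 0 t :=
      (heg.comp (continuous_const.sub continuous_id)).intervalIntegrable 0 t
    have hI2 : IntervalIntegrable (fun s => lam ^ 2 * (eg (t - s) * P s)) volume 0 t :=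
      (continuous_const.mul ((heg.comp (continuous_const.sub continuous_id)).mul
        hPc)).intervalIntegrable 0 t
    rw [hcongr, intervalIntegral.integral_sub hI1 hI2, intervalIntegral.integral_const_mul]
    have e7 : (∫ s in (0:ℝ)..t, eg (t - s)) = ∫ s in (0:ℝ)..t, g s := by
      have h := intervalIntegral.integral_comp_sub_left (a := (0:ℝ)) (b := t) eg t
      simp only [sub_zero, sub_self] at h
      rw [h]
      apply intervalIntegral.integral_congr
      intro v hv
      rw [uIcc_of_le ht] at hv
      show g (max v 0) = g v
      rw [hmax v hv.1]
    have e8 : (∫ s in (0:ℝ)..t, eg (t - s) * P s) = cnv eg P t := rfl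
    rw [e7, e8]
  rw [hsplit2, hfinal]
  have hl2 : lam ^ 2 ≠ 0 := pow_ne_zero 2 hlam.ne'
  field_simp
  ring
end

section
/- Let L > 0, γ₀ = √(2/L), λₙ = nπ/L, and αₙ = 2γ₀ if n is odd, αₙ = 0 if n is even. Let T > 0, let g and β be continuous on [0,T], and let zₙ : [0,T] → ℝ be continuous functions with |zₙ(t)| ≤ C for all n and all t ∈ [0,T]. For each n define θₙ(t) = (γ₀/λₙ)·∫₀ᵗ g(s) ds − (γ₀/λₙ)·∫₀ᵗ g(t−s)·(zₙ(s) + ∫₀ˢ β(s−r)zₙ(r) dr) ds, and define H(t) = ∑_{n=1}^∞ (αₙ/λₙ²)·zₙ(t) (the series converges uniformly on [0,T]). Then for every t ∈ [0,T] the series ∑_{n=1}^∞ (αₙ/λₙ)·θₙ(t) converges and equals γ₀·[ (∫₀ᵗ g(s) ds)·∑_{n=1}^∞ αₙ/λₙ² − ∫₀ᵗ g(t−s)H(s) ds − ∫₀ᵗ β(s)·(∫₀^{t−s} g(t−s−r)H(r) dr) ds ]. -/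
open Real
open MeasureTheory intervalIntegral Set

/-- Interchange of sum and interval integral with a summable uniform bound. -/
lemma my_hasSum_intervalIntegral {a b : ℝ} (hab : a ≤ b)
    (f : ℕ → ℝ → ℝ) (F : ℝ → ℝ) (d : ℕ → ℝ)
    (hf : ∀ n, Continuous (f n))
    (hFs : ∀ x ∈ Set.Icc a b, HasSum (fun n => f n x) (F x))
    (hd : Summable d)
    (hbound : ∀ n, ∀ x ∈ Set.Icc a b, |f n x| ≤ d n) :
    HasSum (fun n => ∫ x in a..b, f n x) (∫ x in a..b, F x) := by
  simp only [intervalIntegral.integral_of_le hab]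
  have hint : ∀ n, IntegrableOn (f n) (Set.Ioc a b) :=
    fun n => (hf n).integrableOn_Ioc
  have hnorm : Summable fun n => ∫ x in Set.Ioc a b, ‖f n x‖ := by
    apply hd.mul_right (b - a) |>.of_nonneg_of_le
      (fun n => integral_nonneg fun x => norm_nonneg _)
    intro n
    have h0 : (0:ℝ) ≤ ∫ x in Set.Ioc a b, ‖f n x‖ :=
      integral_nonneg fun x => norm_nonneg _
    calc ∫ x in Set.Ioc a b, ‖f n x‖ = ‖∫ x in Set.Ioc a b, ‖f n x‖‖ := (Real.norm_of_nonneg h0).symm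
      _ ≤ d n * (volume (Set.Ioc a b)).toReal := by
          apply norm_setIntegral_le_of_norm_le_const (by simp [Real.volume_Ioc])
          · intro x hx
            simpa [Real.norm_eq_abs, abs_abs] using hbound n x (Set.Ioc_subset_Icc_self hx)
      _ = d n * (b - a) := by rw [Real.volume_Ioc, ENNReal.toReal_ofReal (by linarith)]
  have key := hasSum_integral_of_summable_integral_norm
    (F := f) (μ := volume.restrict (Set.Ioc a b))
    (fun n => (hint n)) hnorm
  have : ∫ x in Set.Ioc a b, (∑' n, f n x) = ∫ x in Set.Ioc a b, F x := by
    apply setIntegral_congr_fun measurableSet_Ioc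
    intro x hx
    exact (hFs x (Set.Ioc_subset_Icc_self hx)).tsum_eq
  rwa [this] at key

/-- Fubini on a triangle for continuous integrands. -/
lemma my_triangle_swap {t : ℝ} (ht : 0 ≤ t) (φ : ℝ → ℝ → ℝ)
    (hφ : Continuous fun p : ℝ × ℝ => φ p.1 p.2) :
    ∫ s in (0:ℝ)..t, ∫ r in (0:ℝ)..s, φ s r = ∫ r in (0:ℝ)..t, ∫ s in r..t, φ s r := by
  set μ := volume.restrict (Set.Ioc (0:ℝ) t) with hμ
  set Ψ : ℝ → ℝ → ℝ := fun s r => if r ≤ s then φ s r else 0 with hΨ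
  have hmeas : StronglyMeasurable (Function.uncurry Ψ) := by
    have : Function.uncurry Ψ = Set.indicator {p : ℝ × ℝ | p.2 ≤ p.1}
        (fun p => φ p.1 p.2) := by
      ext p
      simp [Function.uncurry, Ψ, Set.indicator_apply]
    rw [this]
    exact hφ.stronglyMeasurable.indicator
      ((isClosed_le continuous_snd continuous_fst).measurableSet)
  obtain ⟨M, hM⟩ := (isCompact_Icc.prod isCompact_Icc).exists_bound_of_continuousOn
    (s := Set.Icc (0:ℝ) t ×ˢ Set.Icc (0:ℝ) t) hφ.continuousOn
  have hM0 : 0 ≤ M :=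
    (norm_nonneg _).trans (hM ((0:ℝ),(0:ℝ)) ⟨⟨le_rfl, ht⟩, ⟨le_rfl, ht⟩⟩)
  have hInt : Integrable (Function.uncurry Ψ) (μ.prod μ) := by
    apply Integrable.mono' (integrable_const M) hmeas.aestronglyMeasurable
    rw [hμ, Measure.prod_restrict]
    filter_upwards [ae_restrict_mem (measurableSet_Ioc.prod measurableSet_Ioc)] with p hp
    rcases hp with ⟨hp1, hp2⟩
    by_cases h : p.2 ≤ p.1
    · simpa [Function.uncurry, Ψ, h] using
        hM p ⟨Set.Ioc_subset_Icc_self hp1, Set.Ioc_subset_Icc_self hp2⟩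
    · simp [Function.uncurry, Ψ, h, hM0]
  have swap := integral_integral_swap hInt
  have hL : ∫ s in (0:ℝ)..t, ∫ r in (0:ℝ)..s, φ s r = ∫ s, (∫ r, Ψ s r ∂μ) ∂μ := by
    rw [intervalIntegral.integral_of_le ht]
    apply setIntegral_congr_fun measurableSet_Ioc
    intro s hs
    dsimp only
    have hs0 : 0 ≤ s := le_of_lt hs.1
    have : ∫ r, Ψ s r ∂μ = ∫ r in Set.Ioc (0:ℝ) t, (Set.Iic s).indicator (φ s) r := by
      apply setIntegral_congr_fun measurableSet_Ioc
      intro r _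
      simp [Ψ, Set.indicator_apply, Set.mem_Iic]
    rw [this, setIntegral_indicator measurableSet_Iic, Set.Ioc_inter_Iic,
      min_eq_right hs.2, intervalIntegral.integral_of_le hs0]
  have hR : ∫ r in (0:ℝ)..t, ∫ s in r..t, φ s r = ∫ r, (∫ s, Ψ s r ∂μ) ∂μ := by
    rw [intervalIntegral.integral_of_le ht]
    apply setIntegral_congr_fun measurableSet_Ioc
    intro r hr
    dsimp only
    have : ∫ s, Ψ s r ∂μ = ∫ s in Set.Ioc (0:ℝ) t, (Set.Ici r).indicator (fun s => φ s r) s := by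
      apply setIntegral_congr_fun measurableSet_Ioc
      intro s _
      simp [Ψ, Set.indicator_apply, Set.mem_Ici]
    rw [this, setIntegral_indicator measurableSet_Ici]
    have hset : Set.Ioc (0:ℝ) t ∩ Set.Ici r = Set.Icc r t := by
      ext x
      simp only [Set.mem_inter_iff, Set.mem_Ioc, Set.mem_Ici, Set.mem_Icc]
      constructor
      · rintro ⟨⟨_, h2⟩, h3⟩; exact ⟨h3, h2⟩
      · rintro ⟨h1, h2⟩; exact ⟨⟨lt_of_lt_of_le hr.1 h1, h2⟩, h1⟩
    rw [hset, integral_Icc_eq_integral_Ioc, intervalIntegral.integral_of_le hr.2]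
  rw [hL, hR]
  exact swap

lemma my_summable_base : Summable (fun n : ℕ => 1/((n:ℝ)+1)^2) := by
  have h1 : Summable (fun n : ℕ => 1/(n:ℝ)^2) :=
    summable_one_div_nat_pow.mpr (by norm_num)
  have h2 := (summable_nat_add_iff 1).mpr h1
  apply h2.congr
  intro n
  push_cast
  ring

lemma my_conv_shift (r t : ℝ) (f : ℝ → ℝ) :
    ∫ s in r..t, f s = ∫ x in (0:ℝ)..(t - r), f (x + r) := by
  rw [intervalIntegral.integral_comp_add_right f r, zero_add, sub_add_cancel]

lemma my_conv_comm (u : ℝ) (F₁ F₂ : ℝ → ℝ) :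
    ∫ x in (0:ℝ)..u, F₁ (u - x) * F₂ x = ∫ x in (0:ℝ)..u, F₂ (u - x) * F₁ x := by
  have h := intervalIntegral.integral_comp_sub_left (a := (0:ℝ)) (b := u)
    (fun y => F₁ (u - y) * F₂ y) u
  simp only [sub_sub_cancel, sub_self, sub_zero] at h
  rw [← h]
  apply intervalIntegral.integral_congr
  intro x _
  dsimp only
  ring

theorem stmt_7 (L T C : ℝ) (hL : 0 < L) (hT : 0 < T)
    (g β : ℝ → ℝ) (hg : ContinuousOn g (Set.Icc 0 T)) (hβ : ContinuousOn β (Set.Icc 0 T))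
    (z : ℕ → ℝ → ℝ) (hz : ∀ n ≥ 1, ContinuousOn (z n) (Set.Icc 0 T))
    (hzC : ∀ n ≥ 1, ∀ t ∈ Set.Icc (0:ℝ) T, |z n t| ≤ C)
    (γ₀ : ℝ) (hγ₀ : γ₀ = Real.sqrt (2 / L))
    (lam : ℕ → ℝ) (hlam : ∀ n : ℕ, lam n = (n : ℝ) * Real.pi / L)
    (α : ℕ → ℝ) (hα : ∀ n : ℕ, α n = if Odd n then 2 * γ₀ else 0)
    (θ : ℕ → ℝ → ℝ)
    (hθ : ∀ n ≥ 1, ∀ t : ℝ,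
      θ n t = (γ₀ / lam n) * (∫ s in (0:ℝ)..t, g s)
        - (γ₀ / lam n) *
            ∫ s in (0:ℝ)..t, g (t - s) * (z n s + ∫ r in (0:ℝ)..s, β (s - r) * z n r))
    (H : ℝ → ℝ)
    (hH : ∀ t : ℝ, H t = ∑' n : ℕ, (α (n + 1) / (lam (n + 1)) ^ 2) * z (n + 1) t) :
    ∀ t ∈ Set.Icc (0:ℝ) T,
      HasSum (fun n : ℕ => (α (n + 1) / lam (n + 1)) * θ (n + 1) t)
        (γ₀ * ((∫ s in (0:ℝ)..t, g s) * (∑' n : ℕ, α (n + 1) / (lam (n + 1)) ^ 2)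
          - (∫ s in (0:ℝ)..t, g (t - s) * H s)
          - ∫ s in (0:ℝ)..t, β s * ∫ r in (0:ℝ)..(t - s), g (t - s - r) * H r)) := by
  intro t ht
  obtain ⟨ht0, htT⟩ := ht
  have hT0 : (0:ℝ) ≤ T := hT.le
  -- the clamp to [0,T]
  set cl : ℝ → ℝ := fun x => min (max x 0) T with hcldef
  have hclmem : ∀ x, cl x ∈ Set.Icc 0 T :=
    fun x => ⟨le_min (le_max_right x 0) hT0, min_le_right _ _⟩
  have hcleq : ∀ x ∈ Set.Icc (0:ℝ) T, cl x = x := by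
    intro x hx
    simp only [hcldef]
    rw [max_eq_left hx.1, min_eq_left hx.2]
  have hclc : Continuous cl := (continuous_id.max continuous_const).min continuous_const
  -- clamped versions of the data
  set G : ℝ → ℝ := fun x => g (cl x) with hGdef
  set B : ℝ → ℝ := fun x => β (cl x) with hBdef
  set Z : ℕ → ℝ → ℝ := fun n x => z (n+1) (cl x) with hZdef
  set Hc : ℝ → ℝ := fun x => H (cl x) with hHcdef
  have hGc : Continuous G := hg.comp_continuous hclc hclmem
  have hBc : Continuous B := hβ.comp_continuous hclc hclmem
  have hZc : ∀ n, Continuous (Z n) :=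
    fun n => (hz (n+1) (by omega)).comp_continuous hclc hclmem
  obtain ⟨Mg, hMg⟩ := isCompact_Icc.exists_bound_of_continuousOn hg
  obtain ⟨Mb, hMb⟩ := isCompact_Icc.exists_bound_of_continuousOn hβ
  have hGb : ∀ x, |G x| ≤ Mg := fun x => hMg (cl x) (hclmem x)
  have hBb : ∀ x, |B x| ≤ Mb := fun x => hMb (cl x) (hclmem x)
  have hZb : ∀ n x, |Z n x| ≤ C := fun n x => hzC (n+1) (by omega) _ (hclmem x)
  have hMg0 : 0 ≤ Mg := (abs_nonneg _).trans (hGb 0)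
  have hMb0 : 0 ≤ Mb := (abs_nonneg _).trans (hBb 0)
  have hC0 : 0 ≤ C := (abs_nonneg _).trans (hZb 0 0)
  -- the coefficients
  set c : ℕ → ℝ := fun n => α (n + 1) / (lam (n + 1)) ^ 2 with hcdef
  have hγ0 : 0 ≤ γ₀ := hγ₀ ▸ Real.sqrt_nonneg _
  have hπ : (0:ℝ) < Real.pi := Real.pi_pos
  have hlampos : ∀ n : ℕ, 0 < lam (n+1) := by
    intro n
    rw [hlam]
    have : (0:ℝ) < ((n+1 : ℕ) : ℝ) := by exact_mod_cast Nat.succ_pos n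
    positivity
  have hlamne : ∀ n : ℕ, lam (n+1) ≠ 0 := fun n => (hlampos n).ne'
  set K : ℝ := 2*γ₀*L^2/Real.pi^2 with hKdef
  have hK0 : 0 ≤ K := by
    rw [hKdef]
    apply div_nonneg _ (by positivity)
    nlinarith [sq_nonneg L]
  have hcabs : ∀ n : ℕ, |c n| ≤ K * (1/((n:ℝ)+1)^2) := by
    intro n
    have hcast : ((n+1 : ℕ) : ℝ) = (n:ℝ)+1 := by push_cast; ring
    simp only [hcdef]
    rw [hα, hlam, hcast]
    by_cases hodd : Odd (n+1)
    · rw [if_pos hodd]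
      have hpos : (0:ℝ) < ((n:ℝ)+1) * Real.pi / L := by positivity
      rw [abs_of_nonneg (by positivity)]
      apply le_of_eq
      rw [hKdef]
      field_simp
      try tauto
    · rw [if_neg hodd]
      simp only [zero_div, abs_zero]
      positivity
  have hcsum : Summable c :=
    Summable.of_abs (Summable.of_nonneg_of_le (fun n => abs_nonneg _) hcabs
      (my_summable_base.mul_left K))
  -- HasSum for the (clamped) measured output Hc
  have hZsum : ∀ x : ℝ, HasSum (fun n => c n * Z n x) (Hc x) := by
    intro x
    have hsum : Summable (fun n => c n * Z n x) := by
      apply Summable.of_abs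
      apply Summable.of_nonneg_of_le (fun n => abs_nonneg _) _
        ((my_summable_base.mul_left K).mul_right C)
      intro n
      rw [abs_mul]
      exact mul_le_mul (hcabs n) (hZb n x) (abs_nonneg _)
        (by positivity)
    have he : Hc x = ∑' n, c n * Z n x := hH (cl x)
    rw [he]
    exact hsum.hasSum
  have hHcc : Continuous Hc := by
    have he : (fun x => ∑' n, c n * Z n x) = Hc := by
      funext x
      exact (hZsum x).tsum_eq
    rw [← he]
    apply continuous_tsum (f := fun (n : ℕ) (x : ℝ) => c n * Z n x) (u := fun n : ℕ => K * (1/((n:ℝ)+1)^2) * C)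
    · exact fun n => continuous_const.mul (hZc n)
    · exact (my_summable_base.mul_left K).mul_right C
    · intro n x
      rw [Real.norm_eq_abs, abs_mul]
      exact mul_le_mul (hcabs n) (hZb n x) (abs_nonneg _) (by positivity)
  -- parametric continuity of convolution-type integrals
  have hP1 : ∀ n, Continuous fun s => ∫ r in (0:ℝ)..s, B (s - r) * Z n r := by
    intro n
    apply intervalIntegral.continuous_parametric_intervalIntegral_of_continuous
      (f := fun s r => B (s - r) * Z n r) _ continuous_id
    exact (hBc.comp (continuous_fst.sub continuous_snd)).mul ((hZc n).comp continuous_snd)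
  have hP2 : Continuous fun s => ∫ r in (0:ℝ)..s, B (s - r) * Hc r := by
    apply intervalIntegral.continuous_parametric_intervalIntegral_of_continuous
      (f := fun s r => B (s - r) * Hc r) _ continuous_id
    exact (hBc.comp (continuous_fst.sub continuous_snd)).mul (hHcc.comp continuous_snd)
  -- bound on convolution integrals
  have hconv_bound : ∀ n : ℕ, ∀ s ∈ Set.Icc (0:ℝ) t,
      |∫ r in (0:ℝ)..s, B (s - r) * Z n r| ≤ Mb * C * T := by
    intro n s hs
    have h1 : ‖∫ r in (0:ℝ)..s, B (s - r) * Z n r‖ ≤ Mb * C * |s - 0| := by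
      apply intervalIntegral.norm_integral_le_of_norm_le_const
      intro x _
      rw [Real.norm_eq_abs, abs_mul]
      exact mul_le_mul (hBb _) (hZb n x) (abs_nonneg _) hMb0
    rw [Real.norm_eq_abs] at h1
    calc |∫ r in (0:ℝ)..s, B (s - r) * Z n r| ≤ Mb * C * |s - 0| := h1
      _ ≤ Mb * C * T := by
          rw [sub_zero, abs_of_nonneg hs.1]
          have : s ≤ T := le_trans hs.2 htT
          nlinarith [mul_nonneg hMb0 hC0]
  -- core HasSum for the clamped integrals
  have hcore : HasSum (fun n => c n * ∫ s in (0:ℝ)..t,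
        G (t - s) * (Z n s + ∫ r in (0:ℝ)..s, B (s - r) * Z n r))
      ((∫ s in (0:ℝ)..t, G (t - s) * Hc s)
        + ∫ s in (0:ℝ)..t, G (t - s) * ∫ r in (0:ℝ)..s, B (s - r) * Hc r) := by
    have hfcont : ∀ n, Continuous fun s =>
        c n * (G (t - s) * (Z n s + ∫ r in (0:ℝ)..s, B (s - r) * Z n r)) :=
      fun n => continuous_const.mul ((hGc.comp (continuous_const.sub continuous_id)).mul
        ((hZc n).add (hP1 n)))
    have hd : Summable (fun n : ℕ => K * (1/((n:ℝ)+1)^2) * (Mg * (C + Mb * C * T))) :=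
      (my_summable_base.mul_left K).mul_right _
    have hMgK : (0:ℝ) ≤ Mg * (C + Mb * C * T) :=
      mul_nonneg hMg0 (add_nonneg hC0 (mul_nonneg (mul_nonneg hMb0 hC0) hT0))
    have hFs : ∀ s ∈ Set.Icc (0:ℝ) t,
        HasSum (fun n => c n * (G (t - s) * (Z n s + ∫ r in (0:ℝ)..s, B (s - r) * Z n r)))
          (G (t - s) * (Hc s + ∫ r in (0:ℝ)..s, B (s - r) * Hc r)) := by
      intro s hs
      have hinner : HasSum (fun n => ∫ r in (0:ℝ)..s, c n * (B (s - r) * Z n r))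
          (∫ r in (0:ℝ)..s, B (s - r) * Hc r) := by
        apply my_hasSum_intervalIntegral hs.1 _ _
          (fun n => K * (1/((n:ℝ)+1)^2) * (Mb * C))
        · exact fun n => continuous_const.mul
            ((hBc.comp (continuous_const.sub continuous_id)).mul (hZc n))
        · intro r _
          have h := (hZsum r).mul_left (B (s - r))
          have he : ∀ n, B (s - r) * (c n * Z n r) = c n * (B (s - r) * Z n r) :=
            fun n => by ring
          simpa only [he] using h
        · exact (my_summable_base.mul_left K).mul_right _
        · intro n x _
          rw [abs_mul, abs_mul]
          have h2 : |B (s - x)| * |Z n x| ≤ Mb * C :=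
            mul_le_mul (hBb _) (hZb n x) (abs_nonneg _) hMb0
          exact mul_le_mul (hcabs n) h2 (mul_nonneg (abs_nonneg _) (abs_nonneg _))
            (mul_nonneg hK0 (by positivity))
      simp only [intervalIntegral.integral_const_mul] at hinner
      have h1 := ((hZsum s).add hinner).mul_left (G (t - s))
      have he : ∀ n, G (t - s) * (c n * Z n s + c n * ∫ r in (0:ℝ)..s, B (s - r) * Z n r)
          = c n * (G (t - s) * (Z n s + ∫ r in (0:ℝ)..s, B (s - r) * Z n r)) :=
        fun n => by ring
      simpa only [he] using h1
    have hbound : ∀ n, ∀ s ∈ Set.Icc (0:ℝ) t,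
        |c n * (G (t - s) * (Z n s + ∫ r in (0:ℝ)..s, B (s - r) * Z n r))|
          ≤ K * (1/((n:ℝ)+1)^2) * (Mg * (C + Mb * C * T)) := by
      intro n s hs
      rw [abs_mul, abs_mul]
      apply mul_le_mul (hcabs n) _ (mul_nonneg (abs_nonneg _) (abs_nonneg _))
        (mul_nonneg hK0 (by positivity))
      apply mul_le_mul (hGb _) _ (abs_nonneg _) hMg0
      calc |Z n s + ∫ r in (0:ℝ)..s, B (s - r) * Z n r|
          ≤ |Z n s| + |∫ r in (0:ℝ)..s, B (s - r) * Z n r| := abs_add_le _ _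
        _ ≤ C + Mb * C * T := add_le_add (hZb n s) (hconv_bound n s hs)
    have key := my_hasSum_intervalIntegral ht0 _ _ _ hfcont hFs hd hbound
    simp only [intervalIntegral.integral_const_mul] at key
    have hi1 : IntervalIntegrable (fun s => G (t - s) * Hc s) volume 0 t :=
      ((hGc.comp (continuous_const.sub continuous_id)).mul hHcc).intervalIntegrable _ _
    have hi2 : IntervalIntegrable
        (fun s => G (t - s) * ∫ r in (0:ℝ)..s, B (s - r) * Hc r) volume 0 t :=
      ((hGc.comp (continuous_const.sub continuous_id)).mul hP2).intervalIntegrable _ _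
    have hsplit : (∫ s in (0:ℝ)..t, G (t - s) * (Hc s + ∫ r in (0:ℝ)..s, B (s - r) * Hc r))
        = (∫ s in (0:ℝ)..t, G (t - s) * Hc s)
          + ∫ s in (0:ℝ)..t, G (t - s) * ∫ r in (0:ℝ)..s, B (s - r) * Hc r := by
      rw [← intervalIntegral.integral_add hi1 hi2]
      simp only [mul_add]
    rwa [hsplit] at key
  -- Fubini-type exchange
  have hfub : (∫ s in (0:ℝ)..t, G (t - s) * ∫ r in (0:ℝ)..s, B (s - r) * Hc r)
      = ∫ s in (0:ℝ)..t, B s * ∫ r in (0:ℝ)..(t - s), G (t - s - r) * Hc r := by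
    have hφcont : Continuous fun p : ℝ × ℝ => G (t - p.1) * (B (p.1 - p.2) * Hc p.2) :=
      (hGc.comp (continuous_const.sub continuous_fst)).mul
        ((hBc.comp (continuous_fst.sub continuous_snd)).mul (hHcc.comp continuous_snd))
    have hψcont : Continuous fun p : ℝ × ℝ => B (t - p.1) * (G (p.1 - p.2) * Hc p.2) :=
      (hBc.comp (continuous_const.sub continuous_fst)).mul
        ((hGc.comp (continuous_fst.sub continuous_snd)).mul (hHcc.comp continuous_snd))
    have hW1 : (∫ s in (0:ℝ)..t, G (t - s) * ∫ r in (0:ℝ)..s, B (s - r) * Hc r)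
        = ∫ r in (0:ℝ)..t, Hc r * ∫ x in (0:ℝ)..(t - r), G (t - r - x) * B x := by
      have e1 : (∫ s in (0:ℝ)..t, G (t - s) * ∫ r in (0:ℝ)..s, B (s - r) * Hc r)
          = ∫ s in (0:ℝ)..t, ∫ r in (0:ℝ)..s, G (t - s) * (B (s - r) * Hc r) := by
        apply intervalIntegral.integral_congr
        intro s _
        exact (intervalIntegral.integral_const_mul _ _).symm
      rw [e1, my_triangle_swap ht0 (fun s r => G (t - s) * (B (s - r) * Hc r)) hφcont]
      apply intervalIntegral.integral_congr
      intro r _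
      dsimp only
      have e2 : (∫ s in r..t, G (t - s) * (B (s - r) * Hc r))
          = ∫ s in r..t, (fun y => G (t - y) * B (y - r)) s * Hc r := by
        apply intervalIntegral.integral_congr
        intro y _
        dsimp only
        ring
      rw [e2, intervalIntegral.integral_mul_const,
        my_conv_shift r t (fun y => G (t - y) * B (y - r))]
      have e3 : (∫ x in (0:ℝ)..(t - r), (fun y => G (t - y) * B (y - r)) (x + r))
          = ∫ x in (0:ℝ)..(t - r), G (t - r - x) * B x := by
        apply intervalIntegral.integral_congr
        intro x _
        dsimp only
        rw [show t - (x + r) = t - r - x by ring, add_sub_cancel_right]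
      rw [e3]
      exact mul_comm _ _
    have hW2 : (∫ s in (0:ℝ)..t, B s * ∫ r in (0:ℝ)..(t - s), G (t - s - r) * Hc r)
        = ∫ r in (0:ℝ)..t, Hc r * ∫ x in (0:ℝ)..(t - r), G (t - r - x) * B x := by
      have e0 : (∫ s in (0:ℝ)..t, B s * ∫ r in (0:ℝ)..(t - s), G (t - s - r) * Hc r)
          = ∫ s in (0:ℝ)..t,
              (fun y => B (t - y) * ∫ r in (0:ℝ)..y, G (y - r) * Hc r) (t - s) := by
        apply intervalIntegral.integral_congr
        intro s _
        dsimp only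
        rw [sub_sub_cancel]
      rw [e0, intervalIntegral.integral_comp_sub_left
        (fun y => B (t - y) * ∫ r in (0:ℝ)..y, G (y - r) * Hc r) t, sub_self, sub_zero]
      have e1 : (∫ x in (0:ℝ)..t, B (t - x) * ∫ r in (0:ℝ)..x, G (x - r) * Hc r)
          = ∫ x in (0:ℝ)..t, ∫ r in (0:ℝ)..x, B (t - x) * (G (x - r) * Hc r) := by
        apply intervalIntegral.integral_congr
        intro x _
        exact (intervalIntegral.integral_const_mul _ _).symm
      rw [e1, my_triangle_swap ht0 (fun s r => B (t - s) * (G (s - r) * Hc r)) hψcont]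
      apply intervalIntegral.integral_congr
      intro r _
      dsimp only
      have e2 : (∫ s in r..t, B (t - s) * (G (s - r) * Hc r))
          = ∫ s in r..t, (fun y => B (t - y) * G (y - r)) s * Hc r := by
        apply intervalIntegral.integral_congr
        intro y _
        dsimp only
        ring
      rw [e2, intervalIntegral.integral_mul_const,
        my_conv_shift r t (fun y => B (t - y) * G (y - r))]
      have e3 : (∫ x in (0:ℝ)..(t - r), (fun y => B (t - y) * G (y - r)) (x + r))
          = ∫ x in (0:ℝ)..(t - r), B (t - r - x) * G x := by
        apply intervalIntegral.integral_congr
        intro x _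
        dsimp only
        rw [show t - (x + r) = t - r - x by ring, add_sub_cancel_right]
      rw [e3, my_conv_comm (t - r) B G]
      exact mul_comm _ _
    rw [hW1, hW2]
  -- congruences between clamped and original integrals
  have hAc : (∫ s in (0:ℝ)..t, g s) = ∫ s in (0:ℝ)..t, G s := by
    apply intervalIntegral.integral_congr
    intro s hs
    rw [Set.uIcc_of_le ht0] at hs
    simp only [hGdef]
    rw [hcleq s ⟨hs.1, le_trans hs.2 htT⟩]
  have hJ1c : (∫ s in (0:ℝ)..t, g (t - s) * H s) = ∫ s in (0:ℝ)..t, G (t - s) * Hc s := by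
    apply intervalIntegral.integral_congr
    intro s hs
    rw [Set.uIcc_of_le ht0] at hs
    obtain ⟨hs0, hst⟩ := hs
    simp only [hGdef, hHcdef]
    rw [hcleq (t - s) ⟨by linarith, by linarith⟩, hcleq s ⟨hs0, by linarith⟩]
  have hJ2c : (∫ s in (0:ℝ)..t, β s * ∫ r in (0:ℝ)..(t - s), g (t - s - r) * H r)
      = ∫ s in (0:ℝ)..t, B s * ∫ r in (0:ℝ)..(t - s), G (t - s - r) * Hc r := by
    apply intervalIntegral.integral_congr
    intro s hs
    rw [Set.uIcc_of_le ht0] at hs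
    obtain ⟨hs0, hst⟩ := hs
    dsimp only
    have e1 : B s = β s := by simp only [hBdef]; rw [hcleq s ⟨hs0, by linarith⟩]
    have e2 : (∫ r in (0:ℝ)..(t - s), G (t - s - r) * Hc r)
        = ∫ r in (0:ℝ)..(t - s), g (t - s - r) * H r := by
      apply intervalIntegral.integral_congr
      intro r hr
      rw [Set.uIcc_of_le (by linarith : (0:ℝ) ≤ t - s)] at hr
      obtain ⟨hr0, hrts⟩ := hr
      simp only [hGdef, hHcdef]
      rw [hcleq (t - s - r) ⟨by linarith, by linarith⟩, hcleq r ⟨hr0, by linarith⟩]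
    rw [e1, e2]
  have hIc : ∀ n : ℕ,
      (∫ s in (0:ℝ)..t, g (t - s) * (z (n+1) s + ∫ r in (0:ℝ)..s, β (s - r) * z (n+1) r))
      = ∫ s in (0:ℝ)..t, G (t - s) * (Z n s + ∫ r in (0:ℝ)..s, B (s - r) * Z n r) := by
    intro n
    apply intervalIntegral.integral_congr
    intro s hs
    rw [Set.uIcc_of_le ht0] at hs
    obtain ⟨hs0, hst⟩ := hs
    dsimp only
    have e1 : G (t - s) = g (t - s) := by
      simp only [hGdef]; rw [hcleq (t - s) ⟨by linarith, by linarith⟩]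
    have e2 : Z n s = z (n+1) s := by
      simp only [hZdef]; rw [hcleq s ⟨hs0, by linarith⟩]
    have e3 : (∫ r in (0:ℝ)..s, B (s - r) * Z n r)
        = ∫ r in (0:ℝ)..s, β (s - r) * z (n+1) r := by
      apply intervalIntegral.integral_congr
      intro r hr
      rw [Set.uIcc_of_le hs0] at hr
      obtain ⟨hr0, hrs⟩ := hr
      simp only [hBdef, hZdef]
      rw [hcleq (s - r) ⟨by linarith, by linarith⟩, hcleq r ⟨hr0, by linarith⟩]
    rw [e1, e2, e3]
  -- rewrite the summand
  have hrw : (fun n : ℕ => (α (n + 1) / lam (n + 1)) * θ (n + 1) t)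
      = fun n : ℕ => γ₀ * (∫ s in (0:ℝ)..t, G s) * c n
          - γ₀ * (c n * ∫ s in (0:ℝ)..t,
              G (t - s) * (Z n s + ∫ r in (0:ℝ)..s, B (s - r) * Z n r)) := by
    funext n
    rw [hθ (n+1) (by omega) t, hAc, ← hIc n]
    simp only [hcdef]
    field_simp [hlamne n]
  rw [hrw, hAc, hJ1c, hJ2c, ← hfub]
  have final := ((hcsum.hasSum).mul_left (γ₀ * (∫ s in (0:ℝ)..t, G s))).sub
    (hcore.mul_left γ₀)
  convert final using 1
  case e'_3 => rfl
  ring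
end

section
/- Let L > 0, C > 0, λₙ = (n + 1/2)π/L, and let (ξₙ)_{n≥1} be a square-summable sequence of real numbers. Suppose zₙ : [0,L] → ℝ are continuous functions of the form zₙ(t) = cos(λₙ t) + Mₙ(t)/λₙ, where each Mₙ is continuous and |Mₙ(t)| ≤ C for all n and all t ∈ [0,L]. Then the series ∑_{n=1}^∞ (−1)ⁿ ξₙ zₙ converges in L²(0,L), i.e. the partial sums ∑_{n=1}^N (−1)ⁿ ξₙ zₙ form a Cauchy sequence in L²(0,L). -/
open Real

/- L²(0,L) convergence of the series ∑ (−1)ⁿ ξₙ zₙ for square-summable (ξₙ) and mode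
resolvents zₙ(t) = cos(λₙt) + Mₙ(t)/λₙ with Mₙ uniformly bounded, λₙ = (n+1/2)π/L:
the partial sums form a Cauchy sequence in L²(0,L). -/

lemma int_cos_smul {c : ℝ} (hc : c ≠ 0) (L : ℝ) :
    ∫ t in (0:ℝ)..L, Real.cos (c * t) = Real.sin (c * L) / c := by
  have h := intervalIntegral.mul_integral_comp_mul_left (a := (0:ℝ)) (b := L) (c := c) (f := Real.cos)
  rw [integral_cos, mul_zero, Real.sin_zero, sub_zero] at h
  rw [eq_div_iff hc, mul_comm]
  exact h

lemma ortho (L : ℝ) (hL : 0 < L) (lam : ℕ → ℝ)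
    (hlam : ∀ n : ℕ, lam n = ((n : ℝ) + 1 / 2) * Real.pi / L) (m n : ℕ) :
    ∫ t in (0:ℝ)..L, Real.cos (lam m * t) * Real.cos (lam n * t)
      = if m = n then L / 2 else 0 := by
  have hπ := Real.pi_pos
  have key : ∀ t : ℝ, Real.cos (lam m * t) * Real.cos (lam n * t)
      = (Real.cos ((lam m - lam n) * t) + Real.cos ((lam m + lam n) * t)) / 2 := by
    intro t
    have h := Real.two_mul_cos_mul_cos (lam m * t) (lam n * t)
    rw [← sub_mul, ← add_mul] at h
    linarith
  simp only [key]
  rw [intervalIntegral.integral_div, intervalIntegral.integral_add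
    ((by fun_prop : Continuous fun t : ℝ => Real.cos ((lam m - lam n) * t)).intervalIntegrable _ _)
    ((by fun_prop : Continuous fun t : ℝ => Real.cos ((lam m + lam n) * t)).intervalIntegrable _ _)]
  have hsum_pos : 0 < lam m + lam n := by
    rw [hlam, hlam]; positivity
  have I2 : (∫ t in (0:ℝ)..L, Real.cos ((lam m + lam n) * t)) = 0 := by
    rw [int_cos_smul hsum_pos.ne' L]
    have he : (lam m + lam n) * L = ((m + n + 1 : ℕ) : ℝ) * Real.pi := by
      rw [hlam, hlam]; push_cast; field_simp; ring
    rw [he, Real.sin_nat_mul_pi, zero_div]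
  by_cases hmn : m = n
  · subst hmn
    simp only [sub_self, zero_mul, Real.cos_zero, if_pos rfl]
    rw [intervalIntegral.integral_const, I2]
    simp
  · have hd : lam m - lam n ≠ 0 := by
      rw [hlam, hlam]
      intro h
      apply hmn
      have : ((m : ℝ) + 1/2) * Real.pi / L = ((n : ℝ) + 1/2) * Real.pi / L := by linarith
      field_simp at this
      exact_mod_cast (by linarith : (m:ℝ) = n)
    have I1 : (∫ t in (0:ℝ)..L, Real.cos ((lam m - lam n) * t)) = 0 := by
      rw [int_cos_smul hd L]
      have he : (lam m - lam n) * L = (((m : ℤ) - (n : ℤ) : ℤ) : ℝ) * Real.pi := by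
        rw [hlam, hlam]; push_cast; field_simp; ring
      rw [he, Real.sin_int_mul_pi, zero_div]
    rw [I1, I2, if_neg hmn]
    norm_num

lemma key_bound (L C : ℝ) (hL : 0 < L) (hC : 0 < C)
    (lam : ℕ → ℝ) (hlam : ∀ n : ℕ, lam n = ((n : ℝ) + 1 / 2) * Real.pi / L)
    (ξ : ℕ → ℝ) (z M : ℕ → ℝ → ℝ)
    (hzc : ∀ n ≥ 1, ContinuousOn (z n) (Set.Icc 0 L))
    (hMc : ∀ n ≥ 1, ContinuousOn (M n) (Set.Icc 0 L))
    (hMb : ∀ n ≥ 1, ∀ t ∈ Set.Icc (0:ℝ) L, |M n t| ≤ C)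
    (hzform : ∀ n ≥ 1, ∀ t ∈ Set.Icc (0:ℝ) L,
      z n t = Real.cos (lam n * t) + M n t / lam n) (a b : ℕ) :
    (∫ t in (0:ℝ)..L, (∑ n ∈ Finset.Icc (a+1) b, (-1:ℝ)^n * ξ n * z n t)^2)
      ≤ L * (∑ n ∈ Finset.Icc (a+1) b, ξ n ^ 2)
        + 2*L*C^2 * (∑ n ∈ Finset.Icc (a+1) b, |ξ n| / lam n)^2 := by
  have hπ := Real.pi_pos
  have hlp : ∀ k : ℕ, 0 < lam k := fun k => by rw [hlam]; positivity
  set S := Finset.Icc (a+1) b with hS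
  have hS1 : ∀ n ∈ S, 1 ≤ n := fun n hn => by
    have := (Finset.mem_Icc.1 hn).1; omega
  set c : ℕ → ℝ := fun n => (-1:ℝ)^n * ξ n with hc'
  set g : ℝ → ℝ := fun t => ∑ n ∈ S, c n * Real.cos (lam n * t) with hg'
  set h : ℝ → ℝ := fun t => ∑ n ∈ S, c n * (M n t / lam n) with hh'
  have hIcc : Set.uIcc (0:ℝ) L = Set.Icc 0 L := Set.uIcc_of_le hL.le
  -- continuity
  have hgc : Continuous g := by
    apply continuous_finset_sum
    intro n _
    fun_prop
  have hhc : ContinuousOn h (Set.Icc 0 L) := by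
    apply continuousOn_finset_sum
    intro n hn
    exact continuousOn_const.mul ((hMc n (hS1 n hn)).div_const _)
  have hfc : ContinuousOn (fun t => ∑ n ∈ S, c n * z n t) (Set.Icc 0 L) := by
    apply continuousOn_finset_sum
    intro n hn
    exact continuousOn_const.mul (hzc n (hS1 n hn))
  -- pointwise decomposition
  have hdecomp : ∀ t ∈ Set.Icc (0:ℝ) L, (∑ n ∈ S, c n * z n t) = g t + h t := by
    intro t ht
    rw [hg', hh', ← Finset.sum_add_distrib]
    apply Finset.sum_congr rfl
    intro n hn
    rw [hzform n (hS1 n hn) t ht]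
    ring
  -- step 1 : ∫ f² ≤ 2∫g² + 2∫h²
  have hint_g2 : IntervalIntegrable (fun t => g t ^ 2) MeasureTheory.volume 0 L :=
    ((hgc.pow 2)).intervalIntegrable _ _
  have hint_h2 : IntervalIntegrable (fun t => h t ^ 2) MeasureTheory.volume 0 L :=
    ((hhc.pow 2).mono (by rw [hIcc])).intervalIntegrable
  have step1 : (∫ t in (0:ℝ)..L, (∑ n ∈ S, c n * z n t)^2)
      ≤ (∫ t in (0:ℝ)..L, 2 * g t ^ 2 + 2 * h t ^ 2) := by
    apply intervalIntegral.integral_mono_on hL.le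
    · exact ((hfc.pow 2).mono (by rw [hIcc])).intervalIntegrable
    · exact ((hint_g2.const_mul 2).add (hint_h2.const_mul 2))
    · intro t ht
      rw [hdecomp t ht]
      nlinarith [sq_nonneg (g t - h t)]
  have step1' : (∫ t in (0:ℝ)..L, 2 * g t ^ 2 + 2 * h t ^ 2)
      = 2 * (∫ t in (0:ℝ)..L, g t ^ 2) + 2 * (∫ t in (0:ℝ)..L, h t ^ 2) := by
    rw [intervalIntegral.integral_add (hint_g2.const_mul 2) (hint_h2.const_mul 2),
      intervalIntegral.integral_const_mul, intervalIntegral.integral_const_mul]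
  -- step 2 : ∫ g² = (L/2) ∑ ξ²
  have step2 : (∫ t in (0:ℝ)..L, g t ^ 2) = (L/2) * ∑ n ∈ S, ξ n ^ 2 := by
    have hexp : ∀ t : ℝ, g t ^ 2
        = ∑ m ∈ S, ∑ n ∈ S, (c m * c n) * (Real.cos (lam m * t) * Real.cos (lam n * t)) := by
      intro t
      rw [hg', sq, Finset.sum_mul_sum]
      apply Finset.sum_congr rfl; intro m _
      apply Finset.sum_congr rfl; intro n _
      ring
    simp only [hexp]
    rw [intervalIntegral.integral_finset_sum]
    · have : ∀ m ∈ S, (∫ t in (0:ℝ)..L,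
          ∑ n ∈ S, (c m * c n) * (Real.cos (lam m * t) * Real.cos (lam n * t)))
          = ξ m ^ 2 * (L/2) := by
        intro m hm
        rw [intervalIntegral.integral_finset_sum]
        · have : ∀ n ∈ S, (∫ t in (0:ℝ)..L,
              (c m * c n) * (Real.cos (lam m * t) * Real.cos (lam n * t)))
              = (c m * c n) * (if m = n then L/2 else 0) := by
            intro n _
            rw [intervalIntegral.integral_const_mul, ortho L hL lam hlam m n]
          rw [Finset.sum_congr rfl this, Finset.sum_eq_single_of_mem m hm
            (fun n _ hne => by rw [if_neg (fun hh => hne hh.symm), mul_zero])]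
          rw [if_pos rfl, hc']
          have h1 : ((-1:ℝ)^m * ξ m) * ((-1:ℝ)^m * ξ m) = ξ m ^ 2 := by
            have : ((-1:ℝ)^m)^2 = 1 := by
              rw [← pow_mul, mul_comm, pow_mul]; norm_num
            nlinarith [this]
          rw [mul_comm ((-1:ℝ)^m * ξ m)]
          rw [show (fun n => (-1:ℝ)^n * ξ n) m = (-1:ℝ)^m * ξ m from rfl]
          nlinarith [h1]
        · intro n _
          apply Continuous.intervalIntegrable
          fun_prop
      rw [Finset.sum_congr rfl this, ← Finset.sum_mul]
      ring
    · intro m _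
      apply Continuous.intervalIntegrable
      apply continuous_finset_sum
      intro n _
      fun_prop
  -- step 3 : ∫ h² ≤ L * (C * ∑ |ξ|/λ)²
  have step3 : (∫ t in (0:ℝ)..L, h t ^ 2)
      ≤ L * (C * ∑ n ∈ S, |ξ n| / lam n)^2 := by
    have hbd : ∀ t ∈ Set.Icc (0:ℝ) L, h t ^ 2 ≤ (C * ∑ n ∈ S, |ξ n| / lam n)^2 := by
      intro t ht
      have habs : |h t| ≤ C * ∑ n ∈ S, |ξ n| / lam n := by
        calc |h t| ≤ ∑ n ∈ S, |c n * (M n t / lam n)| := Finset.abs_sum_le_sum_abs _ _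
          _ ≤ ∑ n ∈ S, C * (|ξ n| / lam n) := by
              apply Finset.sum_le_sum
              intro n hn
              have hcn : |c n| = |ξ n| := by
                rw [hc', abs_mul, abs_pow, abs_neg, abs_one, one_pow, one_mul]
              rw [abs_mul, abs_div, abs_of_pos (hlp n), hcn]
              calc |ξ n| * (|M n t| / lam n) ≤ |ξ n| * (C / lam n) := by
                    have := hMb n (hS1 n hn) t ht
                    have := (hlp n).le
                    gcongr
                _ = C * (|ξ n| / lam n) := by ring
          _ = C * ∑ n ∈ S, |ξ n| / lam n := by rw [Finset.mul_sum]
      calc h t ^ 2 = |h t| ^ 2 := (sq_abs _).symm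
        _ ≤ (C * ∑ n ∈ S, |ξ n| / lam n)^2 := by
            apply pow_le_pow_left₀ (abs_nonneg _) habs
    calc (∫ t in (0:ℝ)..L, h t ^ 2)
        ≤ (∫ _t in (0:ℝ)..L, (C * ∑ n ∈ S, |ξ n| / lam n)^2) := by
          apply intervalIntegral.integral_mono_on hL.le hint_h2
            (intervalIntegrable_const) hbd
      _ = L * (C * ∑ n ∈ S, |ξ n| / lam n)^2 := by
          rw [intervalIntegral.integral_const, smul_eq_mul, sub_zero]
  calc (∫ t in (0:ℝ)..L, (∑ n ∈ S, c n * z n t)^2)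
      ≤ 2 * ((L/2) * ∑ n ∈ S, ξ n ^ 2) + 2 * (L * (C * ∑ n ∈ S, |ξ n| / lam n)^2) := by
        rw [← step2]
        refine le_trans step1 ?_
        rw [step1']
        linarith [step3]
    _ = L * (∑ n ∈ S, ξ n ^ 2) + 2*L*C^2 * (∑ n ∈ S, |ξ n| / lam n)^2 := by ring

lemma tail_bound (f : ℕ → ℝ) (hf : Summable f) (h0 : ∀ n, 0 ≤ f n)
    (N₀ a b : ℕ) (ha : N₀ ≤ a) :
    ∑ n ∈ Finset.Icc (a+1) b, f n ≤ ∑' k, f (k + (N₀+1)) := by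
  have hsub : Finset.Icc (a+1) b ⊆ Finset.Icc (N₀+1) b :=
    Finset.Icc_subset_Icc_left (by omega)
  have hshift : Summable (fun k => f (k + (N₀+1))) := (summable_nat_add_iff (N₀+1)).2 hf
  calc ∑ n ∈ Finset.Icc (a+1) b, f n
      ≤ ∑ n ∈ Finset.Icc (N₀+1) b, f n :=
        Finset.sum_le_sum_of_subset_of_nonneg hsub (fun i _ _ => h0 i)
    _ = ∑ i ∈ Finset.range (b + 1 - (N₀+1)), f ((N₀+1) + i) := by
        rw [← Finset.Ico_add_one_right_eq_Icc, Finset.sum_Ico_eq_sum_range]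
    _ = ∑ i ∈ Finset.range (b + 1 - (N₀+1)), f (i + (N₀+1)) := by
        apply Finset.sum_congr rfl; intro i _; rw [add_comm]
    _ ≤ ∑' k, f (k + (N₀+1)) := hshift.sum_le_tsum _ (fun i _ => h0 _)

theorem stmt_11 (L C : ℝ) (hL : 0 < L) (hC : 0 < C)
    (lam : ℕ → ℝ) (hlam : ∀ n : ℕ, lam n = ((n : ℝ) + 1 / 2) * Real.pi / L)
    (ξ : ℕ → ℝ) (hξ : Summable fun n : ℕ => ξ n ^ 2)
    (z M : ℕ → ℝ → ℝ)
    (hzc : ∀ n ≥ 1, ContinuousOn (z n) (Set.Icc 0 L))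
    (hMc : ∀ n ≥ 1, ContinuousOn (M n) (Set.Icc 0 L))
    (hMb : ∀ n ≥ 1, ∀ t ∈ Set.Icc (0:ℝ) L, |M n t| ≤ C)
    (hzform : ∀ n ≥ 1, ∀ t ∈ Set.Icc (0:ℝ) L,
      z n t = Real.cos (lam n * t) + M n t / lam n) :
    ∀ ε > 0, ∃ N₀ : ℕ, ∀ N₁ ≥ N₀, ∀ N₂ ≥ N₀,
      (∫ t in (0:ℝ)..L,
        ((∑ n ∈ Finset.Icc 1 N₁, (-1 : ℝ) ^ n * ξ n * z n t)
          - ∑ n ∈ Finset.Icc 1 N₂, (-1 : ℝ) ^ n * ξ n * z n t) ^ 2) < ε := by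
  intro ε hε
  have hπ := Real.pi_pos
  have hlp : ∀ k : ℕ, 0 < lam k := fun k => by rw [hlam]; positivity
  -- summability of |ξ n| / lam n
  have hinv2 : Summable (fun n : ℕ => (1 / lam n)^2) := by
    rw [← summable_nat_add_iff 1]
    have hbase : Summable (fun n : ℕ => 1 / ((n:ℝ)+1)^2) := by
      have := (summable_nat_add_iff (f := fun n : ℕ => 1 / (n:ℝ)^2) 1).2
        (summable_one_div_nat_pow.2 one_lt_two)
      simpa using this
    apply Summable.of_nonneg_of_le (fun n => sq_nonneg _) (fun n => ?_)
      (hbase.mul_left ((L/Real.pi)^2))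
    have hpos : (0:ℝ) < ((n:ℝ)+1) * Real.pi / L := by positivity
    have hle : ((n:ℝ)+1) * Real.pi / L ≤ lam (n+1) := by
      rw [hlam]; push_cast
      have hinvp : (0:ℝ) < Real.pi / L := by positivity
      have : ((n:ℝ)+1+1/2) * Real.pi / L - ((n:ℝ)+1) * Real.pi / L = (1/2) * (Real.pi / L) := by
        ring
      nlinarith [hinvp]
    have h1 : 1 / lam (n+1) ≤ 1 / (((n:ℝ)+1) * Real.pi / L) :=
      one_div_le_one_div_of_le hpos hle
    have h2 : (1 / lam (n+1))^2 ≤ (1 / (((n:ℝ)+1) * Real.pi / L))^2 := by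
      apply pow_le_pow_left₀ (one_div_nonneg.2 (hlp _).le) h1
    refine h2.trans (le_of_eq ?_)
    field_simp
  have hg : Summable (fun n : ℕ => |ξ n| / lam n) := by
    apply Summable.of_nonneg_of_le (fun n => div_nonneg (abs_nonneg _) (hlp n).le) (fun n => ?_)
      ((hξ.add hinv2).div_const 2)
    have h := sq_nonneg (|ξ n| - 1 / lam n)
    have h2 : |ξ n|^2 = ξ n ^2 := sq_abs _
    have h3 : |ξ n| / lam n = |ξ n| * (1 / lam n) := by ring
    rw [h3]
    nlinarith
  -- choose N₀
  have t1 := tendsto_sum_nat_add (fun n => ξ n ^ 2)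
  have t2 := tendsto_sum_nat_add (fun n => |ξ n| / lam n)
  set δ₁ : ℝ := ε / (2 * L) with hδ₁
  set δ₂ : ℝ := Real.sqrt (ε / (4 * L * C^2)) with hδ₂
  have hδ₁p : 0 < δ₁ := by positivity
  have hδ₂p : 0 < δ₂ := Real.sqrt_pos.2 (by positivity)
  have e1 := (t1.eventually (gt_mem_nhds hδ₁p)).and (t2.eventually (gt_mem_nhds hδ₂p))
  obtain ⟨N₀, hN₀⟩ := Filter.eventually_atTop.1 e1
  refine ⟨N₀, ?_⟩
  have main : ∀ A B : ℕ, N₀ ≤ A → A ≤ B →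
      (∫ t in (0:ℝ)..L,
        ((∑ n ∈ Finset.Icc 1 B, (-1 : ℝ) ^ n * ξ n * z n t)
          - ∑ n ∈ Finset.Icc 1 A, (-1 : ℝ) ^ n * ξ n * z n t) ^ 2) < ε := by
    intro A B hA hAB
    have hdiff : ∀ t : ℝ,
        (∑ n ∈ Finset.Icc 1 B, (-1 : ℝ) ^ n * ξ n * z n t)
          - ∑ n ∈ Finset.Icc 1 A, (-1 : ℝ) ^ n * ξ n * z n t
        = ∑ n ∈ Finset.Icc (A+1) B, (-1 : ℝ) ^ n * ξ n * z n t := by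
      intro t
      have h1 : Finset.Icc 1 B = Finset.Ioc 0 B := Finset.Icc_add_one_left_eq_Ioc 0 B
      have h2 : Finset.Icc 1 A = Finset.Ioc 0 A := Finset.Icc_add_one_left_eq_Ioc 0 A
      have h3 : Finset.Icc (A+1) B = Finset.Ioc A B := Finset.Icc_add_one_left_eq_Ioc A B
      rw [h1, h2, h3, ← Finset.sum_Ioc_consecutive _ (Nat.zero_le A) hAB]
      ring
    have heq : (∫ t in (0:ℝ)..L,
        ((∑ n ∈ Finset.Icc 1 B, (-1 : ℝ) ^ n * ξ n * z n t)
          - ∑ n ∈ Finset.Icc 1 A, (-1 : ℝ) ^ n * ξ n * z n t) ^ 2)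
        = ∫ t in (0:ℝ)..L, (∑ n ∈ Finset.Icc (A+1) B, (-1 : ℝ) ^ n * ξ n * z n t) ^ 2 := by
      apply intervalIntegral.integral_congr
      intro t _
      dsimp only
      rw [hdiff t]
    rw [heq]
    have hkey := key_bound L C hL hC lam hlam ξ z M hzc hMc hMb hzform A B
    -- the two tails
    have htail := hN₀ (N₀+1) (Nat.le_succ N₀)
    have hb1 : (∑ n ∈ Finset.Icc (A+1) B, ξ n ^ 2) < δ₁ :=
      lt_of_le_of_lt (tail_bound _ hξ (fun n => sq_nonneg _) N₀ A B hA) htail.1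
    have hb2 : (∑ n ∈ Finset.Icc (A+1) B, |ξ n| / lam n) < δ₂ :=
      lt_of_le_of_lt (tail_bound _ hg (fun n => div_nonneg (abs_nonneg _) (hlp n).le) N₀ A B hA) htail.2
    have hs2nn : (0:ℝ) ≤ ∑ n ∈ Finset.Icc (A+1) B, |ξ n| / lam n := by
      apply Finset.sum_nonneg; intro n _; exact div_nonneg (abs_nonneg _) (hlp n).le
    have hb2sq : (∑ n ∈ Finset.Icc (A+1) B, |ξ n| / lam n)^2 < ε / (4 * L * C^2) := by
      have := Real.sq_sqrt (le_of_lt (by positivity : (0:ℝ) < ε / (4 * L * C^2)))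
      calc (∑ n ∈ Finset.Icc (A+1) B, |ξ n| / lam n)^2 < δ₂^2 := by
            apply pow_lt_pow_left₀ hb2 hs2nn (by norm_num)
        _ = ε / (4 * L * C^2) := by rw [hδ₂]; exact this
    calc (∫ t in (0:ℝ)..L, (∑ n ∈ Finset.Icc (A+1) B, (-1 : ℝ) ^ n * ξ n * z n t) ^ 2)
        ≤ L * (∑ n ∈ Finset.Icc (A+1) B, ξ n ^ 2)
          + 2*L*C^2 * (∑ n ∈ Finset.Icc (A+1) B, |ξ n| / lam n)^2 := hkey
      _ < L * δ₁ + 2*L*C^2 * (ε / (4 * L * C^2)) := by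
          apply add_lt_add
          · exact (mul_lt_mul_iff_right₀ hL).2 hb1
          · exact (mul_lt_mul_iff_right₀ (by positivity)).2 hb2sq
      _ = ε := by
          rw [hδ₁]
          field_simp
          ring
  intro N₁ h₁ N₂ h₂
  rcases le_total N₂ N₁ with hle | hle
  · exact main N₂ N₁ h₂ hle
  · have := main N₁ N₂ h₁ hle
    refine lt_of_le_of_lt (le_of_eq (intervalIntegral.integral_congr fun t _ => ?_)) this
    ring
end

section
/- Let L > 0, γ₀ = √(2/L), λₙ = (n + 1/2)π/L, and C > 0. Let g and β be continuous on [0,L], and let zₙ : [0,L] → ℝ be continuous functions of the form zₙ(t) = cos(λₙ t) + Mₙ(t)/λₙ with Mₙ continuous and |Mₙ(t)| ≤ C for all n and t ∈ [0,L]. For each n define θₙ(t) = (γ₀/λₙ)·∫₀ᵗ g(s) ds − (γ₀/λₙ)·∫₀ᵗ g(t−s)·(zₙ(s) + ∫₀ˢ β(s−r)zₙ(r) dr) ds, and let H be the L²(0,L) limit of the partial sums ∑_{n=1}^N (−1)ⁿ (γ₀/λₙ) zₙ. Then the partial sums ∑_{n=1}^N (−1)ⁿ γ₀ θₙ converge in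 L²(0,L) to the function t ↦ (γ₀² ∑_{n=1}^∞ (−1)ⁿ/λₙ)·∫₀ᵗ g(s) ds − γ₀ ∫₀ᵗ g(t−s)H(s) ds − γ₀ ∫₀ᵗ β(s)·(∫₀^{t−s} g(t−s−r)H(r) dr) ds, where the numerical series ∑_{n=1}^∞ (−1)ⁿ/λₙ converges (conditionally) with sum (L/π)(π/2 − 2). -/
open Real Filter MeasureTheory Set

lemma tri_fubini (F : ℝ → ℝ → ℝ) (hF : Continuous (Function.uncurry F)) {t : ℝ} (ht : 0 ≤ t) :
    (∫ s in (0:ℝ)..t, ∫ r in (0:ℝ)..s, F s r) = ∫ r in (0:ℝ)..t, ∫ s in r..t, F s r := by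
  obtain ⟨c, hc⟩ : ∃ c, ∀ p : ℝ × ℝ, p ∈ Set.Icc 0 t ×ˢ Set.Icc 0 t →
      ‖Function.uncurry F p‖ ≤ c :=
    (isCompact_Icc.prod isCompact_Icc).exists_bound_of_continuousOn hF.continuousOn
  set μ := volume.restrict (Set.Ioc (0:ℝ) t) with hμdef
  have hμ : IsFiniteMeasure μ := by
    constructor
    rw [Measure.restrict_apply_univ, Real.volume_Ioc]
    exact ENNReal.ofReal_lt_top
  set Φ : ℝ × ℝ → ℝ := fun p => if p.2 ≤ p.1 then F p.1 p.2 else 0 with hΦdef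
  have hΦm : AEStronglyMeasurable Φ (μ.prod μ) :=
    (Measurable.ite (measurableSet_le measurable_snd measurable_fst)
      hF.measurable measurable_const).aestronglyMeasurable
  have hprod : μ.prod μ = (volume.prod volume).restrict
      (Set.Ioc (0:ℝ) t ×ˢ Set.Ioc (0:ℝ) t) := Measure.prod_restrict _ _
  have hΦi : Integrable Φ (μ.prod μ) := by
    refine (integrable_const c).mono' hΦm ?_
    have hmem : ∀ᵐ p ∂(μ.prod μ), p ∈ Set.Ioc (0:ℝ) t ×ˢ Set.Ioc (0:ℝ) t := by
      rw [hprod]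
      exact ae_restrict_mem ((measurableSet_Ioc).prod (measurableSet_Ioc))
    filter_upwards [hmem] with p hp
    by_cases h : p.2 ≤ p.1
    · simp only [hΦdef, if_pos h]
      exact hc p ⟨Ioc_subset_Icc_self hp.1, Ioc_subset_Icc_self hp.2⟩
    · simp only [hΦdef, if_neg h, norm_zero]
      exact (norm_nonneg (Function.uncurry F p)).trans
        (hc p ⟨Ioc_subset_Icc_self hp.1, Ioc_subset_Icc_self hp.2⟩)
  have key : (∫ s, ∫ r, Φ (s, r) ∂μ ∂μ) = ∫ r, ∫ s, Φ (s, r) ∂μ ∂μ :=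
    integral_integral_swap hΦi
  have hL : (∫ s in (0:ℝ)..t, ∫ r in (0:ℝ)..s, F s r) = ∫ s, ∫ r, Φ (s, r) ∂μ ∂μ := by
    rw [intervalIntegral.integral_of_le ht]
    refine setIntegral_congr_fun measurableSet_Ioc (fun s hs => ?_)
    have h1 : ∫ r, Φ (s, r) ∂μ = ∫ r in Set.Iic s, F s r ∂μ := by
      rw [← MeasureTheory.integral_indicator (measurableSet_Iic : MeasurableSet (Set.Iic s))]
      refine integral_congr_ae (Filter.Eventually.of_forall fun r => ?_)
      by_cases h : r ≤ s <;> simp [hΦdef, Set.indicator, Set.mem_Iic, h]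
    have h2 : μ.restrict (Set.Iic s) = volume.restrict (Set.Ioc 0 s) := by
      rw [hμdef, Measure.restrict_restrict (measurableSet_Iic : MeasurableSet (Set.Iic s))]
      congr 1
      ext r; simp only [Set.mem_inter_iff, Set.mem_Iic, Set.mem_Ioc]
      constructor
      · rintro ⟨h1', h2', h3'⟩; exact ⟨h2', h1'⟩
      · rintro ⟨h1', h2'⟩; exact ⟨h2', h1', h2'.trans hs.2⟩
    rw [intervalIntegral.integral_of_le hs.1.le, h1, h2]
  have hR : (∫ r in (0:ℝ)..t, ∫ s in r..t, F s r) = ∫ r, ∫ s, Φ (s, r) ∂μ ∂μ := by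
    rw [intervalIntegral.integral_of_le ht]
    refine setIntegral_congr_fun measurableSet_Ioc (fun r hr => ?_)
    have h1 : ∫ s, Φ (s, r) ∂μ = ∫ s in Set.Ici r, F s r ∂μ := by
      rw [← MeasureTheory.integral_indicator (measurableSet_Ici : MeasurableSet (Set.Ici r))]
      refine integral_congr_ae (Filter.Eventually.of_forall fun s => ?_)
      by_cases h : r ≤ s <;> simp [hΦdef, Set.indicator, Set.mem_Ici, h]
    have h2 : μ.restrict (Set.Ici r) = volume.restrict (Set.Icc r t) := by
      rw [hμdef, Measure.restrict_restrict (measurableSet_Ici : MeasurableSet (Set.Ici r))]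
      congr 1
      ext s; simp only [Set.mem_inter_iff, Set.mem_Ici, Set.mem_Ioc, Set.mem_Icc]
      constructor
      · rintro ⟨h1', _, h3'⟩; exact ⟨h1', h3'⟩
      · rintro ⟨h1', h2'⟩; exact ⟨h1', hr.1.trans_le h1', h2'⟩
    rw [intervalIntegral.integral_of_le hr.2, h1, h2, integral_Icc_eq_integral_Ioc]
  rw [hL, hR, key]

lemma conv_comm (f h : ℝ → ℝ) (t : ℝ) :
    (∫ s in (0:ℝ)..t, f (t - s) * h s) = ∫ s in (0:ℝ)..t, f s * h (t - s) := by
  have := intervalIntegral.integral_comp_sub_left (a := (0:ℝ)) (b := t)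
    (fun x => f x * h (t - x)) t
  simp only [sub_zero, sub_self] at this
  rw [← this]
  refine intervalIntegral.integral_congr fun s _ => ?_
  simp [sub_sub_cancel]

lemma conv_assoc (f b u : ℝ → ℝ) (hf : Continuous f) (hb : Continuous b) (hu : Continuous u)
    {t : ℝ} (ht : 0 ≤ t) :
    (∫ s in (0:ℝ)..t, f (t - s) * ∫ r in (0:ℝ)..s, b (s - r) * u r)
      = ∫ s in (0:ℝ)..t, b s * ∫ r in (0:ℝ)..(t - s), f (t - s - r) * u r := by
  -- LHS via triangle fubini
  have hFc : Continuous (Function.uncurry fun s r => f (t - s) * (b (s - r) * u r)) := by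
    apply Continuous.mul
    · exact hf.comp (continuous_const.sub continuous_fst)
    · exact (hb.comp (continuous_fst.sub continuous_snd)).mul (hu.comp continuous_snd)
  have hL : (∫ s in (0:ℝ)..t, f (t - s) * ∫ r in (0:ℝ)..s, b (s - r) * u r)
      = ∫ r in (0:ℝ)..t, u r * ∫ s in (0:ℝ)..(t - r), f (t - r - s) * b s := by
    have h1 : (∫ s in (0:ℝ)..t, f (t - s) * ∫ r in (0:ℝ)..s, b (s - r) * u r)
        = ∫ s in (0:ℝ)..t, ∫ r in (0:ℝ)..s, f (t - s) * (b (s - r) * u r) := by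
      refine intervalIntegral.integral_congr fun s _ => ?_
      rw [← intervalIntegral.integral_const_mul]
    rw [h1, tri_fubini _ hFc ht]
    refine intervalIntegral.integral_congr fun r hr => ?_
    -- inner : ∫ s in r..t, f (t-s) * (b (s-r) * u r) = u r * ∫ s in 0..(t-r), f (t-r-s) * b s
    have h2 := intervalIntegral.integral_comp_add_right (a := (0:ℝ)) (b := t - r)
      (fun s => f (t - s) * (b (s - r) * u r)) r
    simp only [zero_add, sub_add_cancel] at h2
    rw [← h2]
    rw [← intervalIntegral.integral_const_mul]
    refine intervalIntegral.integral_congr fun s _ => ?_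
    ring_nf
  -- RHS via substitution s ↦ t - s then triangle fubini
  have hGc : Continuous (Function.uncurry fun s r => b (t - s) * (f (s - r) * u r)) := by
    apply Continuous.mul
    · exact hb.comp (continuous_const.sub continuous_fst)
    · exact (hf.comp (continuous_fst.sub continuous_snd)).mul (hu.comp continuous_snd)
  have hR : (∫ s in (0:ℝ)..t, b s * ∫ r in (0:ℝ)..(t - s), f (t - s - r) * u r)
      = ∫ r in (0:ℝ)..t, u r * ∫ s in (0:ℝ)..(t - r), f (t - r - s) * b s := by
    have h0 := intervalIntegral.integral_comp_sub_left (a := (0:ℝ)) (b := t)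
      (fun x => b x * ∫ r in (0:ℝ)..(t - x), f (t - x - r) * u r) t
    simp only [sub_zero, sub_self] at h0
    have h1 : (∫ s in (0:ℝ)..t, b s * ∫ r in (0:ℝ)..(t - s), f (t - s - r) * u r)
        = ∫ s in (0:ℝ)..t, ∫ r in (0:ℝ)..s, b (t - s) * (f (s - r) * u r) := by
      rw [← h0]
      refine intervalIntegral.integral_congr fun s _ => ?_
      simp only [sub_sub_cancel]
      rw [← intervalIntegral.integral_const_mul]
    rw [h1, tri_fubini _ hGc ht]
    refine intervalIntegral.integral_congr fun r hr => ?_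
    have h2 := intervalIntegral.integral_comp_add_right (a := (0:ℝ)) (b := t - r)
      (fun s => b (t - s) * (f (s - r) * u r)) r
    simp only [zero_add, sub_add_cancel] at h2
    rw [← h2]
    have h3 : (∫ s in (0:ℝ)..(t - r), b (t - (s + r)) * (f (s + r - r) * u r))
        = ∫ s in (0:ℝ)..(t - r), u r * (f ((t - r) - ((t - r) - s)) * b ((t - r) - s)) := by
      refine intervalIntegral.integral_congr fun s _ => ?_
      ring_nf
    rw [h3]
    have h4 := intervalIntegral.integral_comp_sub_left (a := (0:ℝ)) (b := t - r)
      (fun s => u r * (f ((t - r) - s) * b s)) (t - r)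
    simp only [sub_zero, sub_self] at h4
    rw [h4]
    rw [← intervalIntegral.integral_const_mul]
  rw [hL, hR]

lemma conv_cont (f H : ℝ → ℝ) (hf : Continuous f) (c : ℝ) (hc : ∀ x, |f x| ≤ c)
    (L : ℝ) (hH : IntegrableOn H (Set.Ioc 0 L)) :
    Continuous fun x : ℝ =>
      ∫ r in Set.Ioc (0:ℝ) L, Set.indicator (Set.Iic x) (fun r => f (x - r) * H r) r := by
  set μ := volume.restrict (Set.Ioc (0:ℝ) L) with hμdef
  rw [continuous_iff_continuousAt]
  intro x₀
  apply MeasureTheory.continuousAt_of_dominated (bound := fun r => c * |H r|)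
  · filter_upwards with x
    exact AEStronglyMeasurable.indicator
      (((hf.comp (continuous_const.sub continuous_id)).aestronglyMeasurable).mul
        hH.aestronglyMeasurable) measurableSet_Iic
  · filter_upwards with x
    filter_upwards with r
    have h0c : (0:ℝ) ≤ c := (abs_nonneg _).trans (hc 0)
    by_cases h : r ∈ Set.Iic x
    · rw [Set.indicator_of_mem h]
      rw [Real.norm_eq_abs, abs_mul]
      exact mul_le_mul_of_nonneg_right (hc _) (abs_nonneg _)
    · rw [Set.indicator_of_notMem h]
      simp only [norm_zero]
      exact mul_nonneg h0c (abs_nonneg _)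
  · exact hH.norm.const_mul c
  · have hne : ∀ᵐ r ∂μ, r ≠ x₀ := by
      refine ae_iff.mpr ?_
      have : {r : ℝ | ¬ r ≠ x₀} = {x₀} := by ext r; simp
      rw [this]
      exact le_antisymm ((Measure.restrict_le_self _).trans_eq (Real.volume_singleton))
        zero_le
    filter_upwards [hne] with r hr
    rcases lt_or_gt_of_ne hr with h | h
    · -- r < x₀ : eventually f (x - r) * H r
      have heq : (fun x => Set.indicator (Set.Iic x) (fun r => f (x - r) * H r) r)
          =ᶠ[nhds x₀] fun x => f (x - r) * H r := by
        filter_upwards [Ioi_mem_nhds h] with x hx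
        exact Set.indicator_of_mem (show r ∈ Set.Iic x from Set.mem_Iic.mpr (le_of_lt hx)) _
      exact ContinuousAt.congr (by fun_prop) heq.symm
    · have heq : (fun x => Set.indicator (Set.Iic x) (fun r => f (x - r) * H r) r)
          =ᶠ[nhds x₀] fun _ => (0:ℝ) := by
        filter_upwards [Iio_mem_nhds h] with x hx
        exact Set.indicator_of_notMem (show r ∉ Set.Iic x from by simpa using not_le.mpr hx) _
      exact ContinuousAt.congr continuousAt_const heq.symm

lemma conv_eq (f H : ℝ → ℝ) (L : ℝ) {x : ℝ} (hx0 : 0 ≤ x) (hxL : x ≤ L) :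
    (∫ r in Set.Ioc (0:ℝ) L, Set.indicator (Set.Iic x) (fun r => f (x - r) * H r) r)
      = ∫ r in (0:ℝ)..x, f (x - r) * H r := by
  rw [show (∫ r in Set.Ioc (0:ℝ) L, Set.indicator (Set.Iic x) (fun r => f (x - r) * H r) r)
      = ∫ r, Set.indicator (Set.Iic x) (fun r => f (x - r) * H r) r
        ∂(volume.restrict (Set.Ioc 0 L)) from rfl,
    MeasureTheory.integral_indicator (measurableSet_Iic : MeasurableSet (Set.Iic x)),
    Measure.restrict_restrict (measurableSet_Iic : MeasurableSet (Set.Iic x))]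
  have : Set.Iic x ∩ Set.Ioc 0 L = Set.Ioc 0 x := by
    ext r; simp only [Set.mem_inter_iff, Set.mem_Iic, Set.mem_Ioc]
    constructor
    · rintro ⟨h1, h2, h3⟩; exact ⟨h2, h1⟩
    · rintro ⟨h1, h2⟩; exact ⟨h2, h1, h2.trans hxL⟩
  rw [this, intervalIntegral.integral_of_le hx0]

/- The deconvolution identity (formula (4.5)) for the variant identification procedure with
insulated right end: the partial sums ∑ (−1)ⁿγ₀θₙ converge in L²(0,L) to
t ↦ (γ₀²∑(−1)ⁿ/λₙ)∫₀ᵗg − γ₀∫₀ᵗ g(t−s)H(s)ds − γ₀∫₀ᵗ β(s)(∫₀^{t−s} g(t−s−r)H(r)dr)ds,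
where ∑(−1)ⁿ/λₙ converges (conditionally) to (L/π)(π/2 − 2). -/
theorem stmt_13 (L C : ℝ) (hL : 0 < L) (hC : 0 < C)
    (γ₀ : ℝ) (hγ₀ : γ₀ = Real.sqrt (2 / L))
    (lam : ℕ → ℝ) (hlam : ∀ n : ℕ, lam n = ((n : ℝ) + 1 / 2) * Real.pi / L)
    (g β : ℝ → ℝ) (hg : ContinuousOn g (Set.Icc 0 L)) (hβ : ContinuousOn β (Set.Icc 0 L))
    (z M : ℕ → ℝ → ℝ)
    (hzc : ∀ n ≥ 1, ContinuousOn (z n) (Set.Icc 0 L))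
    (hMc : ∀ n ≥ 1, ContinuousOn (M n) (Set.Icc 0 L))
    (hMb : ∀ n ≥ 1, ∀ t ∈ Set.Icc (0:ℝ) L, |M n t| ≤ C)
    (hzform : ∀ n ≥ 1, ∀ t ∈ Set.Icc (0:ℝ) L,
      z n t = Real.cos (lam n * t) + M n t / lam n)
    (θ : ℕ → ℝ → ℝ)
    (hθ : ∀ n ≥ 1, ∀ t : ℝ,
      θ n t = (γ₀ / lam n) * (∫ s in (0:ℝ)..t, g s)
        - (γ₀ / lam n) *
            ∫ s in (0:ℝ)..t, g (t - s) * (z n s + ∫ r in (0:ℝ)..s, β (s - r) * z n r))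
    (H : ℝ → ℝ)
    (hHL2 : MeasureTheory.MemLp H 2 (MeasureTheory.volume.restrict (Set.Ioc 0 L)))
    (hHlim : Tendsto (fun N : ℕ => ∫ t in (0:ℝ)..L,
        ((∑ n ∈ Finset.Icc 1 N, (-1 : ℝ) ^ n * (γ₀ / lam n) * z n t) - H t) ^ 2)
      atTop (nhds 0)) :
    Tendsto (fun N : ℕ => ∑ n ∈ Finset.Icc 1 N, (-1 : ℝ) ^ n / lam n)
        atTop (nhds ((L / Real.pi) * (Real.pi / 2 - 2)))
    ∧ Tendsto (fun N : ℕ => ∫ t in (0:ℝ)..L,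
        ((∑ n ∈ Finset.Icc 1 N, (-1 : ℝ) ^ n * γ₀ * θ n t)
          - ((γ₀ ^ 2 * ((L / Real.pi) * (Real.pi / 2 - 2))) * (∫ s in (0:ℝ)..t, g s)
            - γ₀ * (∫ s in (0:ℝ)..t, g (t - s) * H s)
            - γ₀ * ∫ s in (0:ℝ)..t,
                β s * ∫ r in (0:ℝ)..(t - s), g (t - s - r) * H r)) ^ 2)
      atTop (nhds 0) := by
  have hpi : (0:ℝ) < Real.pi := Real.pi_pos
  -- Part 1 : the numerical series
  have hA : Tendsto (fun N : ℕ => ∑ n ∈ Finset.Icc 1 N, (-1 : ℝ) ^ n / lam n)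
      atTop (nhds ((L / Real.pi) * (Real.pi / 2 - 2))) := by
    have h2 : Tendsto (fun N : ℕ => ∑ i ∈ Finset.range (N+1), (-1 : ℝ) ^ i / (2 * i + 1))
        atTop (nhds (Real.pi / 4)) := Real.tendsto_sum_pi_div_four.comp (tendsto_add_atTop_nat 1)
    have h3 : ∀ N : ℕ, ∑ n ∈ Finset.Icc 1 N, (-1 : ℝ) ^ n / lam n
        = (2 * L / Real.pi) * ((∑ i ∈ Finset.range (N+1), (-1 : ℝ) ^ i / (2 * i + 1)) - 1) := by
      intro N
      have hins : Finset.range (N+1) = insert 0 (Finset.Icc 1 N) := by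
        ext i; simp; omega
      rw [hins, Finset.sum_insert (by simp)]
      simp only [pow_zero, Nat.cast_zero]
      have : ∀ n ∈ Finset.Icc 1 N, (-1 : ℝ) ^ n / lam n
          = (2 * L / Real.pi) * ((-1 : ℝ) ^ n / (2 * n + 1)) := by
        intro n _
        rw [hlam n]
        have h2n : (2 * (n:ℝ) + 1) ≠ 0 := by positivity
        field_simp
      rw [Finset.sum_congr rfl this, ← Finset.mul_sum]
      ring
    have := (h2.sub_const 1).const_mul (2 * L / Real.pi)
    convert this using 2 with N
    · exact h3 N
    · field_simp; ring
  refine ⟨hA, ?_⟩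
  -- setup
  set A : ℝ := (L / Real.pi) * (Real.pi / 2 - 2) with hAdef
  set AN : ℕ → ℝ := fun N => ∑ n ∈ Finset.Icc 1 N, (-1 : ℝ) ^ n / lam n with hANdef
  have hγ0 : 0 ≤ γ₀ := hγ₀ ▸ Real.sqrt_nonneg _
  haveI : IsFiniteMeasure (volume.restrict (Set.Ioc (0:ℝ) L)) := by
    constructor
    rw [Measure.restrict_apply_univ, Real.volume_Ioc]
    exact ENNReal.ofReal_lt_top
  -- continuous extensions
  set cl : ℝ → ℝ := fun x => min (max x 0) L with hcldef
  have hclc : Continuous cl := (continuous_id.max continuous_const).min continuous_const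
  have hclmem : ∀ x, cl x ∈ Set.Icc 0 L := fun x =>
    ⟨le_min (le_max_right x 0) hL.le, min_le_right _ _⟩
  have hcleq : ∀ x ∈ Set.Icc (0:ℝ) L, cl x = x := fun x hx => by
    simp only [hcldef, max_eq_left hx.1, min_eq_left hx.2]
  set g' : ℝ → ℝ := fun x => g (cl x) with hg'def
  set β' : ℝ → ℝ := fun x => β (cl x) with hβ'def
  have hg'c : Continuous g' := hg.comp_continuous hclc hclmem
  have hβ'c : Continuous β' := hβ.comp_continuous hclc hclmem
  have hg'eq : ∀ x ∈ Set.Icc (0:ℝ) L, g' x = g x := fun x hx => by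
    simp only [hg'def, hcleq x hx]
  have hβ'eq : ∀ x ∈ Set.Icc (0:ℝ) L, β' x = β x := fun x hx => by
    simp only [hβ'def, hcleq x hx]
  obtain ⟨cg, hcg⟩ := isCompact_Icc.exists_bound_of_continuousOn hg
  obtain ⟨cb, hcb⟩ := isCompact_Icc.exists_bound_of_continuousOn hβ
  set Cg : ℝ := max cg 0 with hCgdef
  set Cβ : ℝ := max cb 0 with hCβdef
  have hCg0 : 0 ≤ Cg := le_max_right _ _
  have hCβ0 : 0 ≤ Cβ := le_max_right _ _
  have hCg : ∀ x, |g' x| ≤ Cg := fun x => by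
    have := hcg (cl x) (hclmem x)
    rw [Real.norm_eq_abs] at this
    exact this.trans (le_max_left _ _)
  have hCβ : ∀ x, |β' x| ≤ Cβ := fun x => by
    have := hcb (cl x) (hclmem x)
    rw [Real.norm_eq_abs] at this
    exact this.trans (le_max_left _ _)
  set z' : ℕ → ℝ → ℝ := fun n x => z n (cl x) with hz'def
  have hz'c : ∀ n, 1 ≤ n → Continuous (z' n) := fun n hn =>
    (hzc n hn).comp_continuous hclc hclmem
  have hz'eq : ∀ n, ∀ x ∈ Set.Icc (0:ℝ) L, z' n x = z n x := fun n x hx => by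
    simp only [hz'def, hcleq x hx]
  set w : ℕ → ℝ → ℝ := fun n x => (-1 : ℝ) ^ n * (γ₀ / lam n) * z' n x with hwdef
  have hwc : ∀ n, 1 ≤ n → Continuous (w n) := fun n hn => continuous_const.mul (hz'c n hn)
  set P : ℕ → ℝ → ℝ := fun N x => ∑ n ∈ Finset.Icc 1 N, w n x with hPdef
  have hPc : ∀ N, Continuous (P N) := fun N =>
    continuous_finset_sum _ fun n hn => hwc n (Finset.mem_Icc.mp hn).1
  set u : ℕ → ℝ → ℝ := fun N x => P N x - H x with hudef
  have hHint : IntegrableOn H (Set.Ioc 0 L) := hHL2.integrable one_le_two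
  have huint : ∀ N, IntegrableOn (u N) (Set.Ioc 0 L) := fun N =>
    ((hPc N).integrableOn_Ioc).sub hHint
  have huL2 : ∀ N, MemLp (u N) 2 (volume.restrict (Set.Ioc 0 L)) := by
    intro N
    refine MemLp.sub ?_ hHL2
    obtain ⟨cp, hcp⟩ := isCompact_Icc.exists_bound_of_continuousOn (hPc N).continuousOn
    refine MemLp.of_bound (hPc N).aestronglyMeasurable (max cp 0) ?_
    filter_upwards [ae_restrict_mem measurableSet_Ioc] with x hx
    exact (hcp x (Set.Ioc_subset_Icc_self hx)).trans (le_max_left _ _)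
  have hu2int : ∀ N, Integrable (fun x => u N x ^ 2) (volume.restrict (Set.Ioc 0 L)) :=
    fun N => (huL2 N).integrable_sq
  set I : ℕ → ℝ := fun N => ∫ x in Set.Ioc (0:ℝ) L, |u N x| with hIdef
  set Q : ℕ → ℝ := fun N => ∫ x in Set.Ioc (0:ℝ) L, u N x ^ 2 with hQdef
  have hI0 : ∀ N, 0 ≤ I N := fun N => integral_nonneg fun x => abs_nonneg _
  have hQlim : Tendsto Q atTop (nhds 0) := by
    have : ∀ N, (∫ t in (0:ℝ)..L,
        ((∑ n ∈ Finset.Icc 1 N, (-1 : ℝ) ^ n * (γ₀ / lam n) * z n t) - H t) ^ 2) = Q N := by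
      intro N
      rw [intervalIntegral.integral_of_le hL.le]
      refine setIntegral_congr_fun measurableSet_Ioc (fun t ht => ?_)
      have : ∑ n ∈ Finset.Icc 1 N, (-1 : ℝ) ^ n * (γ₀ / lam n) * z n t = P N t :=
        (Finset.sum_congr rfl fun n _ => by
          simp only [hwdef, hz'def, hcleq t (Set.Ioc_subset_Icc_self ht)]).symm
      rw [this]
    have heq : (fun N : ℕ => ∫ t in (0:ℝ)..L,
        ((∑ n ∈ Finset.Icc 1 N, (-1 : ℝ) ^ n * (γ₀ / lam n) * z n t) - H t) ^ 2) = Q :=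
      funext this
    rwa [heq] at hHlim
  have hIlim : Tendsto I atTop (nhds 0) := by
    rw [NormedAddCommGroup.tendsto_nhds_zero]
    intro ε hε
    set δ : ℝ := ε / L with hδdef
    have hδ : 0 < δ := div_pos hε hL
    have hQev : ∀ᶠ N in atTop, Q N < δ * ε := by
      have := hQlim.eventually (eventually_lt_nhds (by positivity : (0:ℝ) < δ * ε))
      simpa using this
    filter_upwards [hQev] with N hQN
    have hIb : I N ≤ (δ ^ 2 * L + Q N) / (2 * δ) := by
      have hmono : I N ≤ ∫ x in Set.Ioc (0:ℝ) L, (δ ^ 2 + u N x ^ 2) / (2 * δ) := by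
        refine integral_mono ((huint N).abs) (((integrable_const _).add (hu2int N)).div_const _) ?_
        intro x
        show |u N x| ≤ (δ ^ 2 + u N x ^ 2) / (2 * δ)
        have h1 : 2 * δ * |u N x| ≤ δ ^ 2 + u N x ^ 2 := by
          nlinarith [sq_nonneg (|u N x| - δ), sq_abs (u N x)]
        rw [div_eq_mul_inv, ← sub_nonneg]
        have : (δ ^ 2 + u N x ^ 2) * (2 * δ)⁻¹ - |u N x|
            = ((δ ^ 2 + u N x ^ 2) - 2 * δ * |u N x|) * (2 * δ)⁻¹ := by
          field_simp
        rw [this]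
        exact mul_nonneg (by linarith) (by positivity)
      calc I N ≤ ∫ x in Set.Ioc (0:ℝ) L, (δ ^ 2 + u N x ^ 2) / (2 * δ) := hmono
        _ = (δ ^ 2 * L + Q N) / (2 * δ) := by
            rw [MeasureTheory.integral_div, MeasureTheory.integral_add (integrable_const _)
                (hu2int N), setIntegral_const, Real.volume_real_Ioc_of_le hL.le, sub_zero,
              smul_eq_mul]
            simp only [hQdef]
            ring

    have hδL : δ * L = ε := div_mul_cancel₀ ε hL.ne'
    have h2 : δ ^ 2 * L = δ * ε := by rw [← hδL]; ring
    have : I N < ε := by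
      refine hIb.trans_lt ?_
      rw [div_lt_iff₀ (by positivity)]
      linarith
    rw [Real.norm_eq_abs, abs_of_nonneg (hI0 N)]
    exact this
  -- interval integrability helpers
  have hintH : ∀ x : ℝ, 0 ≤ x → x ≤ L →
      IntervalIntegrable (fun r => g' (x - r) * H r) volume 0 x := by
    intro x hx0 hxL
    rw [intervalIntegrable_iff_integrableOn_Ioc_of_le hx0]
    exact (hHint.mono_set (Set.Ioc_subset_Ioc_right hxL)).bdd_mul (c := Cg)
      ((hg'c.comp (continuous_const.sub continuous_id)).aestronglyMeasurable)
      (Filter.Eventually.of_forall fun r => by simpa [Real.norm_eq_abs] using hCg (x - r))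
  have hu1bound : ∀ N, ∀ x : ℝ, 0 ≤ x → x ≤ L →
      |∫ r in (0:ℝ)..x, g' (x - r) * u N r| ≤ Cg * I N := by
    intro N x hx0 hxL
    have hintu : IntervalIntegrable (fun r => g' (x - r) * u N r) volume 0 x := by
      rw [intervalIntegrable_iff_integrableOn_Ioc_of_le hx0]
      exact ((huint N).mono_set (Set.Ioc_subset_Ioc_right hxL)).bdd_mul (c := Cg)
        ((hg'c.comp (continuous_const.sub continuous_id)).aestronglyMeasurable)
        (Filter.Eventually.of_forall fun r => by simpa [Real.norm_eq_abs] using hCg (x - r))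
    have hintCu : IntervalIntegrable (fun r => Cg * |u N r|) volume 0 x := by
      rw [intervalIntegrable_iff_integrableOn_Ioc_of_le hx0]
      exact (((huint N).mono_set (Set.Ioc_subset_Ioc_right hxL)).abs).const_mul Cg
    have habs : |∫ r in (0:ℝ)..x, g' (x - r) * u N r|
        ≤ ∫ r in (0:ℝ)..x, |g' (x - r) * u N r| := by
      have h := intervalIntegral.norm_integral_le_integral_norm
        (f := fun r => g' (x - r) * u N r) (μ := volume) (a := 0) (b := x) hx0
      simp only [Real.norm_eq_abs] at h
      exact h
    have hmono2 : (∫ r in (0:ℝ)..x, |g' (x - r) * u N r|)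
        ≤ ∫ r in (0:ℝ)..x, Cg * |u N r| := by
      refine intervalIntegral.integral_mono_on hx0 hintu.abs hintCu fun r _ => ?_
      rw [abs_mul]
      exact mul_le_mul_of_nonneg_right (hCg _) (abs_nonneg _)
    have h4 : (∫ r in (0:ℝ)..x, |u N r|) ≤ I N := by
      rw [intervalIntegral.integral_of_le hx0]
      exact setIntegral_mono_set ((huint N).abs)
        (Filter.Eventually.of_forall fun r => abs_nonneg _)
        (HasSubset.Subset.eventuallyLE (Set.Ioc_subset_Ioc_right hxL))
    calc |∫ r in (0:ℝ)..x, g' (x - r) * u N r|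
        ≤ ∫ r in (0:ℝ)..x, |g' (x - r) * u N r| := habs
      _ ≤ ∫ r in (0:ℝ)..x, Cg * |u N r| := hmono2
      _ = Cg * ∫ r in (0:ℝ)..x, |u N r| := intervalIntegral.integral_const_mul _ _
      _ ≤ Cg * I N := mul_le_mul_of_nonneg_left h4 hCg0
  -- the continuous convolution of g' with H
  set φ : ℝ → ℝ := fun x => ∫ r in Set.Ioc (0:ℝ) L,
      Set.indicator (Set.Iic x) (fun r => g' (x - r) * H r) r with hφdef
  have hφc : Continuous φ := conv_cont g' H hg'c Cg hCg L hHint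
  have hφeq : ∀ x : ℝ, 0 ≤ x → x ≤ L → φ x = ∫ r in (0:ℝ)..x, g' (x - r) * H r :=
    fun x hx0 hxL => conv_eq g' H L hx0 hxL
  -- the bound sequence
  set D : ℕ → ℝ := fun N => γ₀ ^ 2 * |AN N - A| * (Cg * L) + γ₀ * (Cg * I N)
      + γ₀ * (L * (Cβ * (Cg * I N))) with hDdef
  -- key pointwise estimate
  have hkey : ∀ N, ∀ t ∈ Set.Ioc (0:ℝ) L,
      |(∑ n ∈ Finset.Icc 1 N, (-1 : ℝ) ^ n * γ₀ * θ n t)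
          - (γ₀ ^ 2 * A * (∫ s in (0:ℝ)..t, g s)
            - γ₀ * (∫ s in (0:ℝ)..t, g (t - s) * H s)
            - γ₀ * ∫ s in (0:ℝ)..t,
                β s * ∫ r in (0:ℝ)..(t - s), g (t - s - r) * H r)| ≤ D N := by
    intro N t ht
    have ht0 : 0 ≤ t := ht.1.le
    have htL : t ≤ L := ht.2
    have hmem : ∀ s, s ∈ Set.Icc 0 t → s ∈ Set.Icc (0:ℝ) L :=
      fun s hs => ⟨hs.1, hs.2.trans htL⟩
    have huIcc : Set.uIcc (0:ℝ) t = Set.Icc 0 t := Set.uIcc_of_le ht0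
    have hG : (∫ s in (0:ℝ)..t, g s) = ∫ s in (0:ℝ)..t, g' s :=
      intervalIntegral.integral_congr fun s hs => (hg'eq s (hmem s (huIcc ▸ hs))).symm
    have hBc : ∀ n, 1 ≤ n → Continuous fun s => ∫ r in (0:ℝ)..s, β' (s - r) * w n r := by
      intro n hn
      apply intervalIntegral.continuous_parametric_intervalIntegral_of_continuous ?_ continuous_id
      exact (hβ'c.comp (continuous_fst.sub continuous_snd)).mul
        ((hwc n hn).comp continuous_snd)
    have hBPc : Continuous fun s => ∫ r in (0:ℝ)..s, β' (s - r) * P N r := by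
      apply intervalIntegral.continuous_parametric_intervalIntegral_of_continuous ?_ continuous_id
      exact (hβ'c.comp (continuous_fst.sub continuous_snd)).mul ((hPc N).comp continuous_snd)
    have hIPc : Continuous fun s => ∫ r in (0:ℝ)..(t - s), g' (t - s - r) * P N r := by
      apply intervalIntegral.continuous_parametric_intervalIntegral_of_continuous ?_
        (continuous_const.sub continuous_id)
      exact (hg'c.comp ((continuous_const.sub continuous_fst).sub continuous_snd)).mul
        ((hPc N).comp continuous_snd)
    have hterm : ∀ n ∈ Finset.Icc 1 N, (-1 : ℝ) ^ n * γ₀ * θ n t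
        = γ₀ ^ 2 * ((-1 : ℝ) ^ n / lam n) * (∫ s in (0:ℝ)..t, g' s)
          - γ₀ * ∫ s in (0:ℝ)..t, g' (t - s) *
              (w n s + ∫ r in (0:ℝ)..s, β' (s - r) * w n r) := by
      intro n hn
      have hn1 : 1 ≤ n := (Finset.mem_Icc.mp hn).1
      have hJ : (∫ s in (0:ℝ)..t, g' (t - s) *
            (w n s + ∫ r in (0:ℝ)..s, β' (s - r) * w n r))
          = ((-1 : ℝ) ^ n * (γ₀ / lam n)) *
            ∫ s in (0:ℝ)..t, g (t - s) * (z n s + ∫ r in (0:ℝ)..s, β (s - r) * z n r) := by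
        rw [← intervalIntegral.integral_const_mul]
        refine intervalIntegral.integral_congr fun s hs => ?_
        rw [huIcc] at hs
        have hsL : s ∈ Set.Icc (0:ℝ) L := hmem s hs
        have htsL : (t - s) ∈ Set.Icc (0:ℝ) L :=
          ⟨by linarith [hs.2], by linarith [hs.1]⟩
        have hinner : (∫ r in (0:ℝ)..s, β' (s - r) * w n r)
            = ((-1 : ℝ) ^ n * (γ₀ / lam n)) * ∫ r in (0:ℝ)..s, β (s - r) * z n r := by
          rw [← intervalIntegral.integral_const_mul]
          refine intervalIntegral.integral_congr fun r hr => ?_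
          rw [Set.uIcc_of_le hs.1] at hr
          have hsr : (s - r) ∈ Set.Icc (0:ℝ) L :=
            ⟨by linarith [hr.2], by linarith [hr.1, hs.2]⟩
          have hrL : r ∈ Set.Icc (0:ℝ) L := ⟨hr.1, by linarith [hr.2, hs.2]⟩
          simp only [hwdef, hz'def, hβ'def, hcleq _ hsr, hcleq _ hrL]
          ring
        show g' (t - s) * (w n s + ∫ r in (0:ℝ)..s, β' (s - r) * w n r) = _
        rw [hinner]
        simp only [hwdef, hz'def, hg'def, hcleq _ htsL, hcleq _ hsL]
        ring
      rw [hθ n hn1 t, hG, hJ]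
      ring
    have hSid : (∑ n ∈ Finset.Icc 1 N, (-1 : ℝ) ^ n * γ₀ * θ n t)
        = γ₀ ^ 2 * AN N * (∫ s in (0:ℝ)..t, g' s)
          - γ₀ * ∫ s in (0:ℝ)..t, g' (t - s) *
              (P N s + ∫ r in (0:ℝ)..s, β' (s - r) * P N r) := by
      rw [Finset.sum_congr rfl hterm, Finset.sum_sub_distrib]
      congr 1
      · rw [← Finset.sum_mul, ← Finset.mul_sum]
      · rw [← Finset.mul_sum]
        congr 1
        have hcontn : ∀ n, 1 ≤ n → Continuous fun s : ℝ => g' (t - s) *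
            (w n s + ∫ r in (0:ℝ)..s, β' (s - r) * w n r) := fun n hn =>
          (hg'c.comp (continuous_const.sub continuous_id)).mul ((hwc n hn).add (hBc n hn))
        rw [← intervalIntegral.integral_finset_sum (fun n hn =>
          (hcontn n (Finset.mem_Icc.mp hn).1).intervalIntegrable 0 t)]
        refine intervalIntegral.integral_congr fun s hs => ?_
        rw [huIcc] at hs
        have hsum : ∑ n ∈ Finset.Icc 1 N, (∫ r in (0:ℝ)..s, β' (s - r) * w n r)
            = ∫ r in (0:ℝ)..s, β' (s - r) * P N r := by
          have hcontm : ∀ n, 1 ≤ n → Continuous fun r : ℝ => β' (s - r) * w n r :=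
            fun n hn => (hβ'c.comp (continuous_const.sub continuous_id)).mul (hwc n hn)
          rw [← intervalIntegral.integral_finset_sum (fun n hn =>
            (hcontm n (Finset.mem_Icc.mp hn).1).intervalIntegrable 0 s)]
          refine intervalIntegral.integral_congr fun r _ => ?_
          simp only [hPdef, Finset.mul_sum]
        show ∑ n ∈ Finset.Icc 1 N, g' (t - s) *
            (w n s + ∫ r in (0:ℝ)..s, β' (s - r) * w n r)
          = g' (t - s) * (P N s + ∫ r in (0:ℝ)..s, β' (s - r) * P N r)
        rw [← hsum]
        simp only [hPdef]
        rw [← Finset.sum_add_distrib, Finset.mul_sum]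
    have hsplit : (∫ s in (0:ℝ)..t, g' (t - s) *
          (P N s + ∫ r in (0:ℝ)..s, β' (s - r) * P N r))
        = (∫ s in (0:ℝ)..t, g' (t - s) * P N s)
          + ∫ s in (0:ℝ)..t, g' (t - s) * ∫ r in (0:ℝ)..s, β' (s - r) * P N r := by
      have hc1 : Continuous fun s : ℝ => g' (t - s) * P N s :=
        (hg'c.comp (continuous_const.sub continuous_id)).mul (hPc N)
      have hc2 : Continuous fun s : ℝ => g' (t - s) * ∫ r in (0:ℝ)..s, β' (s - r) * P N r :=
        (hg'c.comp (continuous_const.sub continuous_id)).mul hBPc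
      rw [← intervalIntegral.integral_add (hc1.intervalIntegrable 0 t)
        (hc2.intervalIntegrable 0 t)]
      refine intervalIntegral.integral_congr fun s _ => ?_
      show g' (t - s) * (P N s + ∫ r in (0:ℝ)..s, β' (s - r) * P N r) = _
      ring
    have hassoc := conv_assoc g' β' (P N) hg'c hβ'c (hPc N) ht0
    have hK2 : (∫ s in (0:ℝ)..t, g (t - s) * H s) = ∫ s in (0:ℝ)..t, g' (t - s) * H s :=
      intervalIntegral.integral_congr fun s hs => by
        rw [huIcc] at hs
        show g (t - s) * H s = g' (t - s) * H s
        rw [hg'eq (t - s) ⟨by linarith [hs.2], by linarith [hs.1]⟩]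
    have hK3 : (∫ s in (0:ℝ)..t, β s * ∫ r in (0:ℝ)..(t - s), g (t - s - r) * H r)
        = ∫ s in (0:ℝ)..t, β' s * φ (t - s) := by
      refine intervalIntegral.integral_congr fun s hs => ?_
      rw [huIcc] at hs
      have hts0 : 0 ≤ t - s := by linarith [hs.2]
      have htsL : t - s ≤ L := by linarith [hs.1]
      have h1 : (∫ r in (0:ℝ)..(t - s), g (t - s - r) * H r)
          = ∫ r in (0:ℝ)..(t - s), g' (t - s - r) * H r :=
        intervalIntegral.integral_congr fun r hr => by
          rw [Set.uIcc_of_le hts0] at hr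
          show g (t - s - r) * H r = g' (t - s - r) * H r
          rw [hg'eq (t - s - r) ⟨by linarith [hr.2], by linarith [hr.1]⟩]
      show β s * (∫ r in (0:ℝ)..(t - s), g (t - s - r) * H r) = β' s * φ (t - s)
      rw [h1, hβ'eq s (hmem s hs), hφeq (t - s) hts0 htsL]
    have hX : (∫ s in (0:ℝ)..t, g' (t - s) * P N s) - (∫ s in (0:ℝ)..t, g' (t - s) * H s)
        = ∫ s in (0:ℝ)..t, g' (t - s) * u N s := by
      have hc1 : Continuous fun s : ℝ => g' (t - s) * P N s :=
        (hg'c.comp (continuous_const.sub continuous_id)).mul (hPc N)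
      rw [← intervalIntegral.integral_sub (hc1.intervalIntegrable 0 t) (hintH t ht0 htL)]
      refine intervalIntegral.integral_congr fun s _ => ?_
      show g' (t - s) * P N s - g' (t - s) * H s = g' (t - s) * u N s
      simp only [hudef]
      ring
    have hY : (∫ s in (0:ℝ)..t, β' s * ∫ r in (0:ℝ)..(t - s), g' (t - s - r) * P N r)
        - (∫ s in (0:ℝ)..t, β' s * φ (t - s))
        = ∫ s in (0:ℝ)..t, β' s * ∫ r in (0:ℝ)..(t - s), g' (t - s - r) * u N r := by
      have hc3 : Continuous fun s : ℝ =>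
          β' s * ∫ r in (0:ℝ)..(t - s), g' (t - s - r) * P N r := hβ'c.mul hIPc
      have hc4 : Continuous fun s : ℝ => β' s * φ (t - s) :=
        hβ'c.mul (hφc.comp (continuous_const.sub continuous_id))
      rw [← intervalIntegral.integral_sub (hc3.intervalIntegrable 0 t)
        (hc4.intervalIntegrable 0 t)]
      refine intervalIntegral.integral_congr fun s hs => ?_
      rw [huIcc] at hs
      have hts0 : 0 ≤ t - s := by linarith [hs.2]
      have htsL : t - s ≤ L := by linarith [hs.1]
      have hsub : (∫ r in (0:ℝ)..(t - s), g' (t - s - r) * P N r)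
            - (∫ r in (0:ℝ)..(t - s), g' (t - s - r) * H r)
          = ∫ r in (0:ℝ)..(t - s), g' (t - s - r) * u N r := by
        have hc5 : Continuous fun r : ℝ => g' (t - s - r) * P N r :=
          (hg'c.comp (continuous_const.sub continuous_id)).mul (hPc N)
        rw [← intervalIntegral.integral_sub (hc5.intervalIntegrable 0 (t - s))
          (hintH (t - s) hts0 htsL)]
        refine intervalIntegral.integral_congr fun r _ => ?_
        show g' (t - s - r) * P N r - g' (t - s - r) * H r = g' (t - s - r) * u N r
        simp only [hudef]
        ring
      show β' s * (∫ r in (0:ℝ)..(t - s), g' (t - s - r) * P N r) - β' s * φ (t - s)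
        = β' s * ∫ r in (0:ℝ)..(t - s), g' (t - s - r) * u N r
      rw [hφeq (t - s) hts0 htsL, ← hsub]
      ring
    have hdiff : (∑ n ∈ Finset.Icc 1 N, (-1 : ℝ) ^ n * γ₀ * θ n t)
        - (γ₀ ^ 2 * A * (∫ s in (0:ℝ)..t, g s)
            - γ₀ * (∫ s in (0:ℝ)..t, g (t - s) * H s)
            - γ₀ * ∫ s in (0:ℝ)..t,
                β s * ∫ r in (0:ℝ)..(t - s), g (t - s - r) * H r)
        = γ₀ ^ 2 * (AN N - A) * (∫ s in (0:ℝ)..t, g' s)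
          - γ₀ * (∫ s in (0:ℝ)..t, g' (t - s) * u N s)
          - γ₀ * ∫ s in (0:ℝ)..t, β' s * ∫ r in (0:ℝ)..(t - s), g' (t - s - r) * u N r := by
      rw [hSid, hsplit, hassoc, hG, hK2, hK3, ← hX, ← hY]
      ring
    rw [hdiff]
    have hGb : |∫ s in (0:ℝ)..t, g' s| ≤ Cg * L := by
      have h := intervalIntegral.norm_integral_le_of_norm_le_const
        (C := Cg) (f := g') (a := 0) (b := t)
        (fun x _ => by rw [Real.norm_eq_abs]; exact hCg x)
      rw [Real.norm_eq_abs, sub_zero, abs_of_nonneg ht0] at h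
      exact h.trans (mul_le_mul_of_nonneg_left htL hCg0)
    have b1 : |γ₀ ^ 2 * (AN N - A) * (∫ s in (0:ℝ)..t, g' s)|
        ≤ γ₀ ^ 2 * |AN N - A| * (Cg * L) := by
      rw [abs_mul, abs_mul, abs_pow, abs_of_nonneg hγ0]
      exact mul_le_mul_of_nonneg_left hGb (by positivity)
    have b2 : |γ₀ * ∫ s in (0:ℝ)..t, g' (t - s) * u N s| ≤ γ₀ * (Cg * I N) := by
      rw [abs_mul, abs_of_nonneg hγ0]
      exact mul_le_mul_of_nonneg_left (hu1bound N t ht0 htL) hγ0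
    have b3 : |γ₀ * ∫ s in (0:ℝ)..t, β' s * ∫ r in (0:ℝ)..(t - s), g' (t - s - r) * u N r|
        ≤ γ₀ * (L * (Cβ * (Cg * I N))) := by
      rw [abs_mul, abs_of_nonneg hγ0]
      refine mul_le_mul_of_nonneg_left ?_ hγ0
      have h := intervalIntegral.norm_integral_le_of_norm_le_const
        (C := Cβ * (Cg * I N))
        (f := fun s => β' s * ∫ r in (0:ℝ)..(t - s), g' (t - s - r) * u N r)
        (a := 0) (b := t) ?_
      · rw [Real.norm_eq_abs, sub_zero, abs_of_nonneg ht0] at h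
        refine h.trans ?_
        rw [mul_comm]
        exact mul_le_mul_of_nonneg_right htL
          (mul_nonneg hCβ0 (mul_nonneg hCg0 (hI0 N)))
      · intro x hx
        rw [Set.uIoc_of_le ht0] at hx
        rw [Real.norm_eq_abs, abs_mul]
        have hx0 : 0 ≤ t - x := by linarith [hx.2]
        have hxL : t - x ≤ L := by linarith [hx.1]
        exact mul_le_mul (hCβ x) (hu1bound N (t - x) hx0 hxL) (abs_nonneg _) hCβ0
    have tri : ∀ a b c : ℝ, |a - b - c| ≤ |a| + |b| + |c| := by
      intro a b c
      calc |a - b - c| = |a + -b + -c| := by rw [sub_eq_add_neg, sub_eq_add_neg]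
        _ ≤ |a + -b| + |(-c)| := abs_add_le _ _
        _ ≤ |a| + |(-b)| + |(-c)| := add_le_add (abs_add_le _ _) le_rfl
        _ = |a| + |b| + |c| := by simp [abs_neg]
    refine (tri _ _ _).trans ?_
    simp only [hDdef]
    exact add_le_add (add_le_add b1 b2) b3
  -- final squeeze
  have hDlim : Tendsto D atTop (nhds 0) := by
    have h1 : Tendsto (fun N => |AN N - A|) atTop (nhds 0) := by
      have := (hA.sub_const A).abs
      simpa using this
    have t1 : Tendsto (fun N => γ₀ ^ 2 * |AN N - A| * (Cg * L)) atTop (nhds 0) := by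
      have := (h1.const_mul (γ₀ ^ 2)).mul_const (Cg * L)
      simpa using this
    have t2 : Tendsto (fun N => γ₀ * (Cg * I N)) atTop (nhds 0) := by
      have := (hIlim.const_mul Cg).const_mul γ₀
      simpa using this
    have t3 : Tendsto (fun N => γ₀ * (L * (Cβ * (Cg * I N)))) atTop (nhds 0) := by
      have := (((hIlim.const_mul Cg).const_mul Cβ).const_mul L).const_mul γ₀
      simpa using this
    have := (t1.add t2).add t3
    rw [hDdef]
    simpa using this
  refine squeeze_zero
    (fun N => intervalIntegral.integral_nonneg hL.le fun t _ => sq_nonneg _)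
    (fun N => ?_) (g := fun N => L * D N ^ 2) ?_
  · rw [intervalIntegral.integral_of_le hL.le]
    have hle : ∀ᵐ t ∂(volume.restrict (Set.Ioc (0:ℝ) L)),
        ((∑ n ∈ Finset.Icc 1 N, (-1 : ℝ) ^ n * γ₀ * θ n t)
          - (γ₀ ^ 2 * A * (∫ s in (0:ℝ)..t, g s)
            - γ₀ * (∫ s in (0:ℝ)..t, g (t - s) * H s)
            - γ₀ * ∫ s in (0:ℝ)..t,
                β s * ∫ r in (0:ℝ)..(t - s), g (t - s - r) * H r)) ^ 2 ≤ D N ^ 2 := by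
      filter_upwards [ae_restrict_mem measurableSet_Ioc] with t ht
      have h := hkey N t ht
      calc ((∑ n ∈ Finset.Icc 1 N, (-1 : ℝ) ^ n * γ₀ * θ n t)
          - (γ₀ ^ 2 * A * (∫ s in (0:ℝ)..t, g s)
            - γ₀ * (∫ s in (0:ℝ)..t, g (t - s) * H s)
            - γ₀ * ∫ s in (0:ℝ)..t,
                β s * ∫ r in (0:ℝ)..(t - s), g (t - s - r) * H r)) ^ 2
          = |(∑ n ∈ Finset.Icc 1 N, (-1 : ℝ) ^ n * γ₀ * θ n t)
          - (γ₀ ^ 2 * A * (∫ s in (0:ℝ)..t, g s)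
            - γ₀ * (∫ s in (0:ℝ)..t, g (t - s) * H s)
            - γ₀ * ∫ s in (0:ℝ)..t,
                β s * ∫ r in (0:ℝ)..(t - s), g (t - s - r) * H r)| ^ 2 := (sq_abs _).symm
        _ ≤ D N ^ 2 := pow_le_pow_left₀ (abs_nonneg _) h 2
    calc (∫ t in Set.Ioc (0:ℝ) L,
          ((∑ n ∈ Finset.Icc 1 N, (-1 : ℝ) ^ n * γ₀ * θ n t)
          - (γ₀ ^ 2 * A * (∫ s in (0:ℝ)..t, g s)
            - γ₀ * (∫ s in (0:ℝ)..t, g (t - s) * H s)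
            - γ₀ * ∫ s in (0:ℝ)..t,
                β s * ∫ r in (0:ℝ)..(t - s), g (t - s - r) * H r)) ^ 2)
        ≤ ∫ _ in Set.Ioc (0:ℝ) L, D N ^ 2 :=
          integral_mono_of_nonneg (Filter.Eventually.of_forall fun t => sq_nonneg _)
            (integrable_const _) hle
      _ = L * D N ^ 2 := by
          rw [setIntegral_const, Real.volume_real_Ioc_of_le hL.le, sub_zero,
            smul_eq_mul]
  · have := (hDlim.pow 2).const_mul L
    simpa using this
end
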